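/- arXiv:1601.04358 — 9 statements merged into one kernel-verified Lean document; each statement's English description precedes it below -/
import Mathlib

section
/- For n > 2 and x > 0, the function L(x) = G(x)·coth(x) − G'(x)/n is nonnegative, where G(x) = ∫₀ˣ sinh(s)^{n−1} ds. -/
open Real

theorem L_nonneg (n : ℝ) (hn : 2 < n) (x : ℝ) (hx : 0 < x) :
    0 ≤ (∫ s in (0:ℝ)..x, Real.sinh s ^ (n - 1)) * (Real.cosh x / Real.sinh x)
        - Real.sinh x ^ (n - 1) / n := by
  have hn0 : (0:ℝ) < n := by linarith
  have hsx : 0 < Real.sinh x := Real.sinh_pos_iff.2 hx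
  have hcx : 0 < Real.cosh x := Real.cosh_pos x
  set F : ℝ → ℝ := fun s => Real.sinh s ^ n / (n * Real.cosh s) with hF
  set D : ℝ → ℝ := fun s =>
    (n * Real.sinh s ^ (n - 1) * Real.cosh s * (n * Real.cosh s)
      - Real.sinh s ^ n * (n * Real.sinh s)) / (n * Real.cosh s) ^ 2 with hD
  have hderiv : ∀ s : ℝ, HasDerivAt F (D s) s := by
    intro s
    have h1 : HasDerivAt (fun t => Real.sinh t ^ n)
        (n * Real.sinh s ^ (n - 1) * Real.cosh s) s :=
      ((Real.hasDerivAt_sinh s).rpow_const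
        (Or.inr (show (1:ℝ) ≤ n by linarith))).congr_deriv (by ring)
    have h2 : HasDerivAt (fun t => n * Real.cosh t) (n * Real.sinh s) s :=
      (Real.hasDerivAt_cosh s).const_mul n
    exact h1.div h2 (by positivity)
  have hcontpow : Continuous fun s => Real.sinh s ^ (n - 1) :=
    Real.continuous_sinh.rpow_const (fun s => Or.inr (by linarith))
  have hcontpow' : Continuous fun s => Real.sinh s ^ n :=
    Real.continuous_sinh.rpow_const (fun s => Or.inr (by linarith))
  have hcontD : Continuous D := by
    apply Continuous.div
    · fun_prop
    · fun_prop
    · intro s; positivity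
  have hintD : IntervalIntegrable D MeasureTheory.volume 0 x :=
    hcontD.intervalIntegrable 0 x
  have hintP : IntervalIntegrable (fun s => Real.sinh s ^ (n - 1))
      MeasureTheory.volume 0 x := hcontpow.intervalIntegrable 0 x
  have hftc : ∫ s in (0:ℝ)..x, D s = F x - F 0 :=
    intervalIntegral.integral_eq_sub_of_hasDerivAt (fun t _ => hderiv t) hintD
  have hF0 : F 0 = 0 := by
    simp [hF, Real.zero_rpow (ne_of_gt hn0)]
  have hmono : ∫ s in (0:ℝ)..x, D s ≤ ∫ s in (0:ℝ)..x, Real.sinh s ^ (n - 1) := by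
    apply intervalIntegral.integral_mono_on (le_of_lt hx) hintD hintP
    intro s hs
    have hss : 0 ≤ Real.sinh s := Real.sinh_nonneg_iff.2 hs.1
    have hcs : 0 < Real.cosh s := Real.cosh_pos s
    rw [hD, div_le_iff₀ (by positivity)]
    have h1 : 0 ≤ Real.sinh s ^ n * (n * Real.sinh s) := by positivity
    have h2 : 0 ≤ Real.sinh s ^ (n - 1) := Real.rpow_nonneg hss _
    nlinarith [sq_nonneg (Real.cosh s)]
  have hkey : F x ≤ ∫ s in (0:ℝ)..x, Real.sinh s ^ (n - 1) := by
    calc F x = F x - F 0 := by rw [hF0]; ring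
    _ = ∫ s in (0:ℝ)..x, D s := hftc.symm
    _ ≤ _ := hmono
  have hpow : Real.sinh x ^ (n - 1) = Real.sinh x ^ n / Real.sinh x := by
    rw [Real.rpow_sub_one (ne_of_gt hsx)]
  rw [hpow, sub_nonneg]
  have hFx : F x = Real.sinh x ^ n / (n * Real.cosh x) := rfl
  rw [hFx] at hkey
  have h2 : Real.sinh x ^ n / (n * Real.cosh x) * (Real.cosh x / Real.sinh x)
      ≤ (∫ s in (0:ℝ)..x, Real.sinh s ^ (n - 1)) * (Real.cosh x / Real.sinh x) :=
    mul_le_mul_of_nonneg_right hkey (by positivity)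
  calc Real.sinh x ^ n / Real.sinh x / n
      = Real.sinh x ^ n / (n * Real.cosh x) * (Real.cosh x / Real.sinh x) := by
        field_simp
    _ ≤ _ := h2
end

section
/- For n > 2 and x ≥ 0, the function g(x) = (n−2)·cosh(x)·m(x) − σ·G(x)·sinh(x)² is nonnegative, where σ = (n−2)/(n+2), m(x) = G(x)·cosh(x) − sinh(x)^n/n, and G(x) = ∫₀ˣ sinh(s)^{n−1} ds. -/
open Real

noncomputable def Gfun (n x : ℝ) : ℝ := ∫ s in (0:ℝ)..x, Real.sinh s ^ (n - 1)
noncomputable def mfun (n x : ℝ) : ℝ := Gfun n x * Real.cosh x - Real.sinh x ^ n / n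
noncomputable def gfun (n x : ℝ) : ℝ :=
  (n - 2) * Real.cosh x * mfun n x - (n - 2) / (n + 2) * Gfun n x * Real.sinh x ^ 2

lemma cont_integrand (n : ℝ) (hn : 2 < n) :
    Continuous fun s : ℝ => Real.sinh s ^ (n - 1) :=
  Real.continuous_sinh.rpow_const fun x => Or.inr (by linarith)

lemma G_hasDerivAt (n : ℝ) (hn : 2 < n) (x : ℝ) :
    HasDerivAt (Gfun n) (Real.sinh x ^ (n - 1)) x :=
  ((cont_integrand n hn).integral_hasStrictDerivAt 0 x).hasDerivAt

lemma G_nonneg (n : ℝ) (hn : 2 < n) {x : ℝ} (hx : 0 ≤ x) : 0 ≤ Gfun n x := by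
  apply intervalIntegral.integral_nonneg hx
  intro s hs
  exact Real.rpow_nonneg (Real.sinh_nonneg_iff.2 hs.1) _

lemma m_hasDerivAt (n : ℝ) (hn : 2 < n) (x : ℝ) :
    HasDerivAt (mfun n) (Gfun n x * Real.sinh x) x := by
  have hP : HasDerivAt (fun t => Real.sinh t ^ n)
      (n * Real.sinh x ^ (n - 1) * Real.cosh x) x := by
    have h1 := Real.hasDerivAt_rpow_const (x := Real.sinh x) (p := n)
      (Or.inr (by linarith))
    exact h1.comp x (Real.hasDerivAt_sinh x)
  have h := ((G_hasDerivAt n hn x).mul (Real.hasDerivAt_cosh x)).sub (hP.div_const n)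
  refine h.congr_deriv ?_
  have hn0 : n ≠ 0 := by linarith
  field_simp
  ring

lemma m_nonneg (n : ℝ) (hn : 2 < n) {x : ℝ} (hx : 0 ≤ x) : 0 ≤ mfun n x := by
  have h0 : mfun n 0 = 0 := by
    simp [mfun, Gfun, Real.zero_rpow (by linarith : n ≠ 0)]
  have hmono : MonotoneOn (mfun n) (Set.Ici (0:ℝ)) := by
    apply monotoneOn_of_deriv_nonneg (convex_Ici 0)
    · exact fun t _ => ((m_hasDerivAt n hn t).differentiableAt.continuousAt).continuousWithinAt
    · intro t ht
      exact ((m_hasDerivAt n hn t).differentiableAt).differentiableWithinAt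
    · intro t ht
      rw [interior_Ici] at ht
      rw [(m_hasDerivAt n hn t).deriv]
      exact mul_nonneg (G_nonneg n hn ht.le) (Real.sinh_nonneg_iff.2 ht.le)
  calc (0:ℝ) = mfun n 0 := h0.symm
    _ ≤ mfun n x := hmono (Set.self_mem_Ici) hx hx

lemma g_hasDerivAt (n : ℝ) (hn : 2 < n) (x : ℝ) :
    HasDerivAt (gfun n)
      ((n - 2) * (Real.sinh x * mfun n x + Real.cosh x * (Gfun n x * Real.sinh x))
        - (n - 2) / (n + 2) * (Real.sinh x ^ (n - 1) * Real.sinh x ^ 2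
            + Gfun n x * (2 * Real.sinh x * Real.cosh x))) x := by
  have h1 : HasDerivAt (fun t => (n - 2) * Real.cosh t * mfun n t)
      ((n - 2) * (Real.sinh x * mfun n x + Real.cosh x * (Gfun n x * Real.sinh x))) x := by
    have := (((Real.hasDerivAt_cosh x).const_mul (n - 2)).mul (m_hasDerivAt n hn x))
    refine this.congr_deriv ?_; ring
  have h2 : HasDerivAt (fun t => (n - 2) / (n + 2) * Gfun n t * Real.sinh t ^ 2)
      ((n - 2) / (n + 2) * (Real.sinh x ^ (n - 1) * Real.sinh x ^ 2
            + Gfun n x * (2 * Real.sinh x * Real.cosh x))) x := by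
    have hs : HasDerivAt (fun t => Real.sinh t ^ 2)
        (2 * Real.sinh x * Real.cosh x) x := by
      have := (Real.hasDerivAt_sinh x).pow 2
      refine this.congr_deriv ?_; ring
    have := (((G_hasDerivAt n hn x).const_mul ((n - 2) / (n + 2))).mul hs)
    refine this.congr_deriv ?_; ring
  exact h1.sub h2

lemma gfun_nonneg (n : ℝ) (hn : 2 < n) {x : ℝ} (hx : 0 ≤ x) : 0 ≤ gfun n x := by
  have h0 : gfun n 0 = 0 := by
    simp [gfun, mfun, Gfun, Real.zero_rpow (by linarith : n ≠ 0)]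
  have hmono : MonotoneOn (gfun n) (Set.Ici (0:ℝ)) := by
    apply monotoneOn_of_deriv_nonneg (convex_Ici 0)
    · exact fun t _ => ((g_hasDerivAt n hn t).differentiableAt.continuousAt).continuousWithinAt
    · intro t ht
      exact (g_hasDerivAt n hn t).differentiableAt.differentiableWithinAt
    · intro t ht
      rw [interior_Ici] at ht
      rw [(g_hasDerivAt n hn t).deriv]
      have hs : 0 < Real.sinh t := Real.sinh_pos_iff.2 ht
      have hrw : Real.sinh t ^ (n - 1) * Real.sinh t ^ 2
          = Real.sinh t * Real.sinh t ^ n := by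
        rw [sq]
        rw [show Real.sinh t ^ (n-1) * (Real.sinh t * Real.sinh t)
            = (Real.sinh t ^ (n-1) * Real.sinh t) * Real.sinh t by ring]
        rw [← Real.rpow_add_one hs.ne' (n - 1)]
        ring_nf
      rw [hrw]
      have hm : 0 ≤ mfun n t := m_nonneg n hn ht.le
      have hkey : (n - 2) * (Real.sinh t * mfun n t
            + Real.cosh t * (Gfun n t * Real.sinh t))
          - (n - 2) / (n + 2) * (Real.sinh t * Real.sinh t ^ n
            + Gfun n t * (2 * Real.sinh t * Real.cosh t))
          = ((n - 2) + n * ((n - 2) / (n + 2))) * (Real.sinh t * mfun n t) := by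
        have hn2 : (n : ℝ) + 2 ≠ 0 := by linarith
        have hn0 : (n : ℝ) ≠ 0 := by linarith
        simp only [mfun]
        field_simp
        ring
      rw [hkey]
      have hc : 0 ≤ (n - 2) + n * ((n - 2) / (n + 2)) := by
        have h := div_nonneg (by linarith : (0:ℝ) ≤ n - 2) (by linarith : (0:ℝ) ≤ n + 2)
        nlinarith
      exact mul_nonneg hc (mul_nonneg hs.le hm)
  calc (0:ℝ) = gfun n 0 := h0.symm
    _ ≤ gfun n x := hmono (Set.self_mem_Ici) hx hx

theorem g_nonneg (n : ℝ) (hn : 2 < n) (x : ℝ) (hx : 0 ≤ x) :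
    0 ≤ (n - 2) * Real.cosh x *
          ((∫ s in (0:ℝ)..x, Real.sinh s ^ (n - 1)) * Real.cosh x - Real.sinh x ^ n / n)
        - (n - 2) / (n + 2) * (∫ s in (0:ℝ)..x, Real.sinh s ^ (n - 1)) * Real.sinh x ^ 2 := by
  have := gfun_nonneg n hn hx
  simpa [gfun, mfun, Gfun] using this
end

section
/- (Key Lemma) For n > 2 and x > 0, L(x) ≥ (n/(n+2))·G(x)²/G'(x), where G(x) = ∫₀ˣ sinh(s)^{n−1} ds and L(x) = G(x)·coth(x) − G'(x)/n. -/
open Real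

theorem key_lemma (n : ℝ) (hn : 2 < n) (x : ℝ) (hx : 0 < x) :
    (∫ s in (0:ℝ)..x, Real.sinh s ^ (n - 1)) * (Real.cosh x / Real.sinh x)
        - Real.sinh x ^ (n - 1) / n
      ≥ n / (n + 2) * (∫ s in (0:ℝ)..x, Real.sinh s ^ (n - 1)) ^ 2 / Real.sinh x ^ (n - 1) := by
  have hn0 : (0:ℝ) < n := by linarith
  have hn2 : (0:ℝ) < n + 2 := by linarith
  set G : ℝ → ℝ := fun t => ∫ s in (0:ℝ)..t, Real.sinh s ^ (n - 1) with hGdef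
  have hgc : Continuous fun t : ℝ => Real.sinh t ^ (n - 1) := by
    refine continuous_iff_continuousAt.2 fun t => ?_
    exact (Real.continuousAt_rpow_const _ _ (Or.inr (by linarith))).comp
      Real.continuous_sinh.continuousAt
  have hGderiv : ∀ t : ℝ, HasDerivAt G (Real.sinh t ^ (n - 1)) t := by
    intro t
    exact intervalIntegral.integral_hasDerivAt_right (hgc.intervalIntegrable 0 t)
      (hgc.stronglyMeasurableAtFilter _ _) hgc.continuousAt
  have hGcont : Continuous G :=
    continuous_iff_continuousAt.2 fun t => ((hGderiv t).differentiableAt).continuousAt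
  have hG0 : G 0 = 0 := intervalIntegral.integral_same
  have hGnonneg : ∀ t : ℝ, 0 ≤ t → 0 ≤ G t := by
    intro t ht
    apply intervalIntegral.integral_nonneg ht
    intro s hs
    exact Real.rpow_nonneg (Real.sinh_nonneg_iff.2 hs.1) _
  have hpow : ∀ (p t : ℝ), 0 < t →
      HasDerivAt (fun u => Real.sinh u ^ p) (p * Real.sinh t ^ (p - 1) * Real.cosh t) t := by
    intro p t ht
    have hs : 0 < Real.sinh t := Real.sinh_pos_iff.2 ht
    exact (Real.hasDerivAt_rpow_const (x := Real.sinh t) (p := p)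
      (Or.inl hs.ne')).comp t (Real.hasDerivAt_sinh t)
  have hcontpow : ∀ p : ℝ, 0 < p → Continuous fun t : ℝ => Real.sinh t ^ p := by
    intro p hp
    refine continuous_iff_continuousAt.2 fun t => ?_
    exact (Real.continuousAt_rpow_const _ _ (Or.inr hp.le)).comp
      Real.continuous_sinh.continuousAt
  set N : ℝ → ℝ := fun t => G t * Real.cosh t - Real.sinh t ^ n / n with hNdef
  set M : ℝ → ℝ := fun t =>
    G t * (1 + (n+1)/(n+2) * Real.sinh t ^ 2) - (1/n) * Real.sinh t ^ n * Real.cosh t with hMdef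
  set F : ℝ → ℝ := fun t =>
    G t * Real.cosh t * Real.sinh t ^ (n-2) - (1/n) * Real.sinh t ^ (2*n-2)
      - n/(n+2) * (G t)^2 with hFdef
  have hrmul : ∀ t : ℝ, 0 < t → ∀ p q r : ℝ, p + q = r →
      Real.sinh t ^ p * Real.sinh t ^ q = Real.sinh t ^ r := by
    intro t ht p q r h
    rw [← Real.rpow_add (Real.sinh_pos_iff.2 ht) p q, h]
  have h2r : ∀ t : ℝ, Real.sinh t ^ (2:ℝ) = Real.sinh t * Real.sinh t := by
    intro t; rw [Real.rpow_two]; ring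
  -- N' = G * sinh
  have hNderiv : ∀ t : ℝ, 0 < t → HasDerivAt N (G t * Real.sinh t) t := by
    intro t ht
    have h1 := ((hGderiv t).mul (Real.hasDerivAt_cosh t)).sub (((hpow n t ht)).div_const n)
    refine h1.congr_deriv (Eq.symm ?_)
    have e2 : Real.sinh t ^ (n-1) * Real.sinh t = Real.sinh t ^ n := by
      have := hrmul t ht (n-1) 1 n (by ring)
      rwa [Real.rpow_one] at this
    field_simp
    nlinarith [e2]
  -- M' = 2(n+1)/(n+2) * sinh * N
  have hMderiv : ∀ t : ℝ, 0 < t →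
      HasDerivAt M (2*(n+1)/(n+2) * Real.sinh t * N t) t := by
    intro t ht
    have hsin := (Real.hasDerivAt_sinh t)
    have hsq' : HasDerivAt (fun u => Real.sinh u ^ (2:ℕ))
        (2 * Real.sinh t ^ (1:ℕ) * Real.cosh t) t := by
      simpa using hsin.fun_pow 2
    have h1 := ((hGderiv t).mul ((hasDerivAt_const t (1:ℝ)).add
        (hsq'.const_mul ((n+1)/(n+2))))).sub
      (((hpow n t ht).const_mul (1/n)).mul (Real.hasDerivAt_cosh t))
    refine h1.congr_deriv (Eq.symm ?_)
    have e2 : Real.sinh t ^ (n-1) * Real.sinh t = Real.sinh t ^ n := by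
      have := hrmul t ht (n-1) 1 n (by ring)
      rwa [Real.rpow_one] at this
    have e3 : Real.cosh t ^ 2 = Real.sinh t ^ 2 + 1 := Real.cosh_sq t
    simp only [hNdef, hMdef, pow_one, Pi.add_apply, Pi.mul_apply]
    have hn2' : (n:ℝ) + 2 ≠ 0 := hn2.ne'
    field_simp
    linear_combination (n * Real.sinh t) * e2 + (n*(n+2)*Real.sinh t ^ (n-1)) * e3
  -- F' = (n-2) * sinh^(n-3) * M
  have hFderiv : ∀ t : ℝ, 0 < t →
      HasDerivAt F ((n-2) * Real.sinh t ^ (n-3) * M t) t := by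
    intro t ht
    have h1 := ((((hGderiv t).mul (Real.hasDerivAt_cosh t)).mul (hpow (n-2) t ht)).sub
      ((hpow (2*n-2) t ht).const_mul (1/n))).sub (((hGderiv t).pow 2).const_mul (n/(n+2)))
    refine h1.congr_deriv (Eq.symm ?_)
    have hs : 0 < Real.sinh t := Real.sinh_pos_iff.2 ht
    have e1 : Real.sinh t ^ (n-1) * Real.sinh t ^ (n-2) = Real.sinh t ^ (2*n-3) :=
      hrmul t ht _ _ _ (by ring)
    have e2 : Real.sinh t * Real.sinh t ^ (n-2) = Real.sinh t ^ (n-1) := by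
      have := hrmul t ht 1 (n-2) (n-1) (by ring)
      rwa [Real.rpow_one] at this
    have e3 : Real.cosh t ^ 2 = Real.sinh t ^ 2 + 1 := Real.cosh_sq t
    have e4 : Real.sinh t ^ (n-3) * Real.sinh t ^ (2:ℝ) = Real.sinh t ^ (n-1) :=
      hrmul t ht _ _ _ (by ring)
    rw [h2r t] at e4
    have e5 : Real.sinh t ^ (n-3) * Real.sinh t ^ n = Real.sinh t ^ (2*n-3) :=
      hrmul t ht _ _ _ (by ring)
    have e6 : (2*n-2-1 : ℝ) = 2*n-3 := by ring
    have e7 : (n-2-1 : ℝ) = n-3 := by ring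
    rw [e6, e7]
    simp only [hMdef, pow_one, Pi.mul_apply]
    have hn2' : (n:ℝ) + 2 ≠ 0 := hn2.ne'
    field_simp
    rw [show n*2-3 = 2*n-3 by ring]
    linear_combination (1:ℝ) *
      ((-(n*(n+2)*Real.cosh t))*e1 + (-(n*(n+2))*G t)*e2
        + (-(n*(n+2)*(n-2))*G t*Real.sinh t^(n-3))*e3
        + (-(n*(n-2))*G t)*e4 + (-((n+2)*(n-2))*Real.cosh t)*e5)
  -- monotonicity helper : nonneg on [0, ∞)
  have mono' : ∀ (f f' : ℝ → ℝ), Continuous f →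
      (∀ t, 0 < t → HasDerivAt f (f' t) t) → (∀ t, 0 < t → 0 ≤ f' t) →
      f 0 = 0 → ∀ t, 0 ≤ t → 0 ≤ f t := by
    intro f f' hc hd hnn h0 t ht
    rcases eq_or_lt_of_le ht with h | h
    · rw [← h, h0]
    · have hmono : MonotoneOn f (Set.Icc 0 t) := by
        apply monotoneOn_of_deriv_nonneg (convex_Icc 0 t) hc.continuousOn
        · intro u hu
          rw [interior_Icc] at hu
          exact ((hd u hu.1).differentiableAt).differentiableWithinAt
        · intro u hu
          rw [interior_Icc] at hu
          rw [(hd u hu.1).deriv]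
          exact hnn u hu.1
      have hh := hmono (Set.left_mem_Icc.2 h.le) (Set.right_mem_Icc.2 h.le) h.le
      linarith [h0 ▸ hh]
  -- N ≥ 0
  have hNcont : Continuous N :=
    (hGcont.mul Real.continuous_cosh).sub ((hcontpow n hn0).div_const n)
  have hN0 : N 0 = 0 := by
    simp [hNdef, hG0, Real.sinh_zero, Real.zero_rpow hn0.ne']
  have hNnonneg : ∀ t : ℝ, 0 ≤ t → 0 ≤ N t := by
    refine mono' N (fun t => G t * Real.sinh t) hNcont hNderiv ?_ hN0
    intro t ht
    exact mul_nonneg (hGnonneg t ht.le) (Real.sinh_nonneg_iff.2 ht.le)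
  -- M ≥ 0
  have hMcont : Continuous M := by
    refine (hGcont.mul ?_).sub
      ((continuous_const.mul (hcontpow n hn0)).mul Real.continuous_cosh)
    exact continuous_const.add (continuous_const.mul (Real.continuous_sinh.pow 2))
  have hM0 : M 0 = 0 := by
    simp [hMdef, hG0, Real.sinh_zero, Real.zero_rpow hn0.ne']
  have hMnonneg : ∀ t : ℝ, 0 ≤ t → 0 ≤ M t := by
    refine mono' M (fun t => 2*(n+1)/(n+2) * Real.sinh t * N t) hMcont hMderiv ?_ hM0
    intro t ht
    have hN := hNnonneg t ht.le
    have hsn : 0 ≤ Real.sinh t := Real.sinh_nonneg_iff.2 ht.le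
    have : (0:ℝ) ≤ 2*(n+1)/(n+2) := by positivity
    positivity
  -- F ≥ 0
  have hFcont : Continuous F :=
    (((hGcont.mul Real.continuous_cosh).mul (hcontpow (n-2) (by linarith))).sub
      (continuous_const.mul (hcontpow (2*n-2) (by linarith)))).sub
      (continuous_const.mul (hGcont.pow 2))
  have hF0 : F 0 = 0 := by
    simp [hFdef, hG0, Real.sinh_zero, Real.zero_rpow (show n-2 ≠ 0 by intro h; linarith),
      Real.zero_rpow (show 2*n-2 ≠ 0 by intro h; linarith)]
  have hFx : 0 ≤ F x := by
    refine mono' F (fun t => (n-2) * Real.sinh t ^ (n-3) * M t) hFcont hFderiv ?_ hF0 x hx.le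
    intro t ht
    have h1 : (0:ℝ) ≤ n - 2 := by linarith
    have h2 : (0:ℝ) ≤ Real.sinh t ^ (n-3) :=
      Real.rpow_nonneg (Real.sinh_nonneg_iff.2 ht.le) _
    have h3 := hMnonneg t ht.le
    positivity
  -- conclude
  have hs : 0 < Real.sinh x := Real.sinh_pos_iff.2 hx
  have hg1 : 0 < Real.sinh x ^ (n-1) := Real.rpow_pos_of_pos hs _
  rw [ge_iff_le, div_le_iff₀ hg1]
  have ea : Real.sinh x * Real.sinh x ^ (n-2) = Real.sinh x ^ (n-1) := by
    have := hrmul x hx 1 (n-2) (n-1) (by ring)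
    rwa [Real.rpow_one] at this
  have eb : Real.sinh x ^ (n-1) * Real.sinh x ^ (n-1) = Real.sinh x ^ (2*n-2) :=
    hrmul x hx _ _ _ (by ring)
  have expand : (G x * (Real.cosh x / Real.sinh x) - Real.sinh x ^ (n-1) / n)
      * Real.sinh x ^ (n-1)
      = G x * Real.cosh x * Real.sinh x ^ (n-2) - (1/n) * Real.sinh x ^ (2*n-2) := by
    field_simp
    rw [show (n-1)*2 = 2*n-2 by ring]
    linear_combination (-(G x * Real.cosh x * n)) * ea - (Real.sinh x) * eb
  simp only [hFdef] at hFx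
  rw [expand]
  linarith [hFx]
end

section
/- For n > 2 and x ≥ 0, f(x) = L(x)·G'(x) − (n/(n+2))·G(x)² satisfies f(0) = 0 and f'(x) = sinh(x)^{n−3}·((n−2)·cosh(x)·m(x) + G(x)·sinh(x)²·(1 − 2n/(n+2))), where L(x)·G'(x) = sinh(x)^{n−2}·m(x), m(x) = G(x)·cosh(x) − sinh(x)^n/n, and G(x) = ∫₀ˣ sinh(s)^{n−1} ds. -/
open Real Asymptotics

theorem f_props (n : ℝ) (hn : 2 < n) (x : ℝ) (hx : 0 ≤ x) :
    (Real.sinh (0:ℝ) ^ (n - 2) *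
        ((∫ s in (0:ℝ)..(0:ℝ), Real.sinh s ^ (n - 1)) * Real.cosh 0 - Real.sinh (0:ℝ) ^ n / n)
      - n / (n + 2) * (∫ s in (0:ℝ)..(0:ℝ), Real.sinh s ^ (n - 1)) ^ 2 = 0)
    ∧ HasDerivAt (fun y : ℝ =>
        Real.sinh y ^ (n - 2) *
          ((∫ s in (0:ℝ)..y, Real.sinh s ^ (n - 1)) * Real.cosh y - Real.sinh y ^ n / n)
        - n / (n + 2) * (∫ s in (0:ℝ)..y, Real.sinh s ^ (n - 1)) ^ 2)
      (Real.sinh x ^ (n - 3) *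
        ((n - 2) * Real.cosh x *
            ((∫ s in (0:ℝ)..x, Real.sinh s ^ (n - 1)) * Real.cosh x - Real.sinh x ^ n / n)
          + (∫ s in (0:ℝ)..x, Real.sinh s ^ (n - 1)) * Real.sinh x ^ 2 * (1 - 2 * n / (n + 2)))) x := by
  have hn0 : n ≠ 0 := by intro h; linarith [h ▸ hn]
  have hn1 : n - 1 ≠ 0 := by intro h; nlinarith [h]
  have hn2 : n - 2 ≠ 0 := by intro h; nlinarith [h]
  have hcont : Continuous fun s : ℝ => Real.sinh s ^ (n - 1) := by
    rw [continuous_iff_continuousAt]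
    intro s
    exact Real.continuous_sinh.continuousAt.rpow_const (Or.inr (by linarith))
  have hG : ∀ y : ℝ, HasDerivAt (fun t : ℝ => ∫ s in (0:ℝ)..t, Real.sinh s ^ (n - 1))
      (Real.sinh y ^ (n - 1)) y := fun y =>
    intervalIntegral.integral_hasDerivAt_right (hcont.intervalIntegrable 0 y)
      (hcont.stronglyMeasurableAtFilter _ _) hcont.continuousAt
  have hzero : Real.sinh (0:ℝ) ^ (n - 2) *
        ((∫ s in (0:ℝ)..(0:ℝ), Real.sinh s ^ (n - 1)) * Real.cosh 0 - Real.sinh (0:ℝ) ^ n / n)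
      - n / (n + 2) * (∫ s in (0:ℝ)..(0:ℝ), Real.sinh s ^ (n - 1)) ^ 2 = 0 := by
    simp [Real.zero_rpow hn2, Real.zero_rpow hn0]
  refine ⟨hzero, ?_⟩
  rcases eq_or_lt_of_le hx with rfl | hxpos
  · -- x = 0 case
    have hval : Real.sinh (0:ℝ) ^ (n - 3) *
        ((n - 2) * Real.cosh 0 *
            ((∫ s in (0:ℝ)..(0:ℝ), Real.sinh s ^ (n - 1)) * Real.cosh 0 - Real.sinh (0:ℝ) ^ n / n)
          + (∫ s in (0:ℝ)..(0:ℝ), Real.sinh s ^ (n - 1)) * Real.sinh (0:ℝ) ^ 2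
              * (1 - 2 * n / (n + 2))) = 0 := by
      simp [Real.zero_rpow hn0]
    rw [hval]
    -- show HasDerivAt f 0 0 via little-o
    rw [hasDerivAt_iff_isLittleO]
    simp only [sub_zero, smul_zero, Real.sinh_zero, intervalIntegral.integral_same]
    have hGo : (fun y : ℝ => ∫ s in (0:ℝ)..y, Real.sinh s ^ (n - 1)) =o[nhds 0] (fun y : ℝ => y) := by
      have h0 := hG 0
      rw [Real.sinh_zero, Real.zero_rpow hn1] at h0
      have := hasDerivAt_iff_isLittleO.mp h0
      simpa using this
    have hGO1 : (fun y : ℝ => ∫ s in (0:ℝ)..y, Real.sinh s ^ (n - 1)) =O[nhds 0] (fun _ : ℝ => (1:ℝ)) := by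
      have : Filter.Tendsto (fun y : ℝ => ∫ s in (0:ℝ)..y, Real.sinh s ^ (n - 1)) (nhds 0) (nhds 0) := by
        have := (hG 0).continuousAt.tendsto
        simpa using this
      exact this.isBigO_one ℝ
    have hcoshO : (fun y : ℝ => Real.cosh y) =O[nhds 0] (fun _ : ℝ => (1:ℝ)) :=
      (Real.continuous_cosh.continuousAt.tendsto).isBigO_one ℝ
    have hsinhO : (fun y : ℝ => Real.sinh y) =O[nhds 0] (fun y : ℝ => y) := by
      have := (Real.hasDerivAt_sinh 0).isBigO_sub
      simpa using this
    have hSn1o1 : (fun y : ℝ => Real.sinh y ^ (n - 1)) =o[nhds 0] (fun _ : ℝ => (1:ℝ)) := by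
      rw [isLittleO_one_iff]
      have : Filter.Tendsto (fun y : ℝ => Real.sinh y ^ (n - 1)) (nhds 0) (nhds (Real.sinh 0 ^ (n-1))) :=
        hcont.continuousAt.tendsto
      simpa [Real.zero_rpow hn1] using this
    have hSno : (fun y : ℝ => Real.sinh y ^ n) =o[nhds 0] (fun y : ℝ => y) := by
      have heq : (fun y : ℝ => Real.sinh y ^ n) = fun y : ℝ => Real.sinh y ^ (n - 1) * Real.sinh y := by
        funext y
        rcases eq_or_ne (Real.sinh y) 0 with h | h
        · rw [h, Real.zero_rpow hn0, Real.zero_rpow hn1, mul_zero]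
        · rw [← Real.rpow_add_one h (n - 1)]; ring_nf
      rw [heq]
      simpa using hSn1o1.mul_isBigO hsinhO
    have hmo : (fun y : ℝ => (∫ s in (0:ℝ)..y, Real.sinh s ^ (n - 1)) * Real.cosh y
        - Real.sinh y ^ n / n) =o[nhds 0] (fun y : ℝ => y) := by
      have h1 : (fun y : ℝ => (∫ s in (0:ℝ)..y, Real.sinh s ^ (n - 1)) * Real.cosh y)
          =o[nhds 0] (fun y : ℝ => y) := by simpa using hGo.mul_isBigO hcoshO
      have h2 : (fun y : ℝ => Real.sinh y ^ n / n) =o[nhds 0] (fun y : ℝ => y) := by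
        simpa [div_eq_inv_mul] using hSno.const_mul_left n⁻¹
      exact h1.sub h2
    have hSn2O1 : (fun y : ℝ => Real.sinh y ^ (n - 2)) =O[nhds 0] (fun _ : ℝ => (1:ℝ)) := by
      have hc : Continuous fun y : ℝ => Real.sinh y ^ (n - 2) := by
        rw [continuous_iff_continuousAt]
        intro s
        exact Real.continuous_sinh.continuousAt.rpow_const (Or.inr (by linarith))
      exact (hc.continuousAt.tendsto).isBigO_one ℝ
    have hterm1 : (fun y : ℝ => Real.sinh y ^ (n - 2) *
        ((∫ s in (0:ℝ)..y, Real.sinh s ^ (n - 1)) * Real.cosh y - Real.sinh y ^ n / n))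
        =o[nhds 0] (fun y : ℝ => y) := by
      simpa using hSn2O1.mul_isLittleO hmo
    have hterm2 : (fun y : ℝ => n / (n + 2) * (∫ s in (0:ℝ)..y, Real.sinh s ^ (n - 1)) ^ 2)
        =o[nhds 0] (fun y : ℝ => y) := by
      have : (fun y : ℝ => (∫ s in (0:ℝ)..y, Real.sinh s ^ (n - 1)) ^ 2)
          =o[nhds 0] (fun y : ℝ => y) := by
        have := hGO1.mul_isLittleO hGo
        simpa [sq] using this
      simpa using this.const_mul_left (n / (n + 2))
    have := hterm1.sub hterm2
    simpa [Real.zero_rpow hn2, Real.zero_rpow hn0] using this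
  · -- x > 0 case
    have hs : 0 < Real.sinh x := Real.sinh_pos_iff.mpr hxpos
    have hsne : Real.sinh x ≠ 0 := ne_of_gt hs
    have hA : HasDerivAt (fun y : ℝ => Real.sinh y ^ (n - 2))
        (Real.cosh x * (n - 2) * Real.sinh x ^ (n - 3)) x := by
      have := (Real.hasDerivAt_sinh x).rpow_const (p := n - 2) (Or.inl hsne)
      simpa [show n - 2 - 1 = n - 3 by ring, mul_assoc] using this
    have hB : HasDerivAt (fun y : ℝ => Real.sinh y ^ n)
        (Real.cosh x * n * Real.sinh x ^ (n - 1)) x := by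
      have := (Real.hasDerivAt_sinh x).rpow_const (p := n) (Or.inl hsne)
      simpa [mul_assoc] using this
    set G : ℝ := ∫ s in (0:ℝ)..x, Real.sinh s ^ (n - 1) with hGdef
    have hm : HasDerivAt (fun y : ℝ =>
        (∫ s in (0:ℝ)..y, Real.sinh s ^ (n - 1)) * Real.cosh y - Real.sinh y ^ n / n)
        (Real.sinh x ^ (n - 1) * Real.cosh x + G * Real.sinh x
          - Real.cosh x * n * Real.sinh x ^ (n - 1) / n) x :=
      ((hG x).mul (Real.hasDerivAt_cosh x)).sub (hB.div_const n)
    have hf := (hA.mul hm).sub (((hG x).pow 2).const_mul (n / (n + 2)))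
    have hS1 : Real.sinh x ^ (n - 2) * Real.sinh x = Real.sinh x ^ (n - 1) := by
      rw [← Real.rpow_add_one hsne (n - 2)]; ring_nf
    have hS2 : Real.sinh x ^ (n - 3) * Real.sinh x ^ (2:ℕ) = Real.sinh x ^ (n - 1) := by
      rw [← Real.rpow_natCast (Real.sinh x) 2, ← Real.rpow_add hs]; congr 1; ring
    convert hf using 1
    · rfl
    · rfl
    · rfl
    have h22 : Real.sinh x ^ 2 = Real.sinh x ^ (2:ℕ) := rfl
    rw [hGdef]
    norm_num
    linear_combination (1 - 2 * n / (n + 2)) * G * hS2 - G * hS1 + Real.sinh x ^ (n - 2) * Real.cosh x * Real.sinh x ^ (n - 1) * mul_inv_cancel₀ hn0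
end

section
/- (Hardy-type inequality) Let R > 0, n > 2, and let u : [0,R] → ℝ be continuously differentiable with u(R) = 0. Then ∫₀ᴿ u(x)²·G'(x) dx ≤ 4·∫₀ᴿ u'(x)²·G(x)²/G'(x) dx, where G(x) = ∫₀ˣ sinh(s)^{n−1} ds. -/
open Real MeasureTheory Set

theorem hardy_type (n R : ℝ) (hn : 2 < n) (hR : 0 < R)
    (u u' : ℝ → ℝ)
    (hu : ∀ x ∈ Set.Icc (0:ℝ) R, HasDerivAt u (u' x) x)
    (hu' : ContinuousOn u' (Set.Icc (0:ℝ) R))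
    (huR : u R = 0) :
    ∫ x in (0:ℝ)..R, u x ^ 2 * Real.sinh x ^ (n - 1)
      ≤ 4 * ∫ x in (0:ℝ)..R,
          u' x ^ 2 * (∫ s in (0:ℝ)..x, Real.sinh s ^ (n - 1)) ^ 2 / Real.sinh x ^ (n - 1) := by
  have hc0 : (0:ℝ) < n - 1 := by linarith
  set f : ℝ → ℝ := fun x => Real.sinh x ^ (n - 1) with hf
  have hfcont : Continuous f :=
    (Real.continuous_rpow_const hc0.le).comp Real.continuous_sinh
  set G : ℝ → ℝ := fun x => ∫ s in (0:ℝ)..x, f s with hGdef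
  have hGderiv : ∀ x, HasDerivAt G (f x) x := fun x =>
    intervalIntegral.integral_hasDerivAt_right (hfcont.intervalIntegrable 0 x)
      (hfcont.stronglyMeasurableAtFilter _ _) hfcont.continuousAt
  have hGcont : Continuous G :=
    continuous_iff_continuousAt.2 fun x => (hGderiv x).continuousAt
  have hG0 : G 0 = 0 := intervalIntegral.integral_same
  have hucont : ContinuousOn u (Icc 0 R) := fun x hx =>
    (hu x hx).continuousAt.continuousWithinAt
  have hfpos : ∀ x : ℝ, 0 < x → 0 < f x := fun x hx =>
    Real.rpow_pos_of_pos (Real.sinh_pos_iff.2 hx) _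
  have hfnonneg : ∀ x : ℝ, 0 ≤ x → 0 ≤ f x := fun x hx =>
    Real.rpow_nonneg (Real.sinh_nonneg_iff.2 hx) _
  have hGnonneg : ∀ x ∈ Icc (0:ℝ) R, 0 ≤ G x := fun x hx =>
    intervalIntegral.integral_nonneg hx.1 (fun s hs => hfnonneg s hs.1)
  have hGle : ∀ x ∈ Ioc (0:ℝ) R, G x ≤ x * f x := by
    intro x hx
    have hmono : ∀ s ∈ Icc (0:ℝ) x, f s ≤ f x := fun s hs =>
      Real.rpow_le_rpow (Real.sinh_nonneg_iff.2 hs.1) (Real.sinh_le_sinh.2 hs.2) hc0.le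
    calc G x ≤ ∫ _ in (0:ℝ)..x, f x :=
          intervalIntegral.integral_mono_on hx.1.le (hfcont.intervalIntegrable _ _)
            intervalIntegrable_const hmono
      _ = x * f x := by rw [intervalIntegral.integral_const, smul_eq_mul]; ring
  -- integrability facts
  have hA : IntervalIntegrable (fun x => 2 * u x * u' x * G x) volume 0 R := by
    apply ContinuousOn.intervalIntegrable
    rw [uIcc_of_le hR.le]
    exact (((continuousOn_const.mul hucont).mul hu').mul hGcont.continuousOn)
  have hB : IntervalIntegrable (fun x => u x ^ 2 * f x) volume 0 R := by
    apply ContinuousOn.intervalIntegrable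
    rw [uIcc_of_le hR.le]
    exact (hucont.pow 2).mul hfcont.continuousOn
  obtain ⟨M, hM⟩ := isCompact_Icc.exists_bound_of_continuousOn hu'
  have hM0 : 0 ≤ M := le_trans (norm_nonneg _) (hM 0 ⟨le_rfl, hR.le⟩)
  have hq : IntervalIntegrable (fun x => u' x ^ 2 * G x ^ 2 / f x) volume 0 R := by
    rw [intervalIntegrable_iff_integrableOn_Ioc_of_le hR.le]
    have hmeas : AEStronglyMeasurable (fun x => u' x ^ 2 * G x ^ 2 / f x)
        (volume.restrict (Ioc 0 R)) := by
      apply ContinuousOn.aestronglyMeasurable _ measurableSet_Ioc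
      apply ContinuousOn.div
      · exact ((hu'.mono Ioc_subset_Icc_self).pow 2).mul (hGcont.continuousOn.pow 2)
      · exact hfcont.continuousOn
      · exact fun x hx => (hfpos x hx.1).ne'
    apply Integrable.mono' (g := fun _ => M ^ 2 * (R ^ 2 * Real.sinh R ^ (n - 1)))
      (integrableOn_const measure_Ioc_lt_top.ne) hmeas
    filter_upwards [ae_restrict_mem measurableSet_Ioc] with x hx
    have hfx : 0 < f x := hfpos x hx.1
    have hGx : 0 ≤ G x := hGnonneg x ⟨hx.1.le, hx.2⟩
    have hGlex := hGle x hx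
    have hq0 : 0 ≤ u' x ^ 2 * G x ^ 2 / f x := by positivity
    rw [Real.norm_eq_abs, abs_of_nonneg hq0]
    have h1 : G x ^ 2 / f x ≤ x ^ 2 * f x := by
      rw [div_le_iff₀ hfx]; nlinarith
    have h2 : f x ≤ Real.sinh R ^ (n - 1) :=
      Real.rpow_le_rpow (Real.sinh_nonneg_iff.2 hx.1.le) (Real.sinh_le_sinh.2 hx.2) hc0.le
    have h3 : |u' x| ≤ M := hM x ⟨hx.1.le, hx.2⟩
    have hu2 : u' x ^ 2 ≤ M ^ 2 := by nlinarith [sq_abs (u' x), abs_nonneg (u' x)]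
    have hx2 : x ^ 2 * f x ≤ R ^ 2 * Real.sinh R ^ (n - 1) := by
      have hxR : x ^ 2 ≤ R ^ 2 := by nlinarith [hx.1.le, hx.2]
      nlinarith [hfnonneg x hx.1.le, sq_nonneg x, sq_nonneg R]
    calc u' x ^ 2 * G x ^ 2 / f x = u' x ^ 2 * (G x ^ 2 / f x) := by ring
      _ ≤ M ^ 2 * (x ^ 2 * f x) := by
          apply mul_le_mul hu2 h1 (by positivity) (by positivity)
      _ ≤ M ^ 2 * (R ^ 2 * Real.sinh R ^ (n - 1)) := by nlinarith
  -- integration by parts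
  have hIBP : ∀ x ∈ uIcc (0:ℝ) R,
      HasDerivAt (fun y => u y ^ 2 * G y) (2 * u x * u' x * G x + u x ^ 2 * f x) x := by
    intro x hx
    rw [uIcc_of_le hR.le] at hx
    have h1 : HasDerivAt (fun y => u y ^ 2) (2 * u x * u' x) x := by
      have := (hu x hx).fun_pow 2
      simpa [mul_comm, mul_assoc, mul_left_comm] using this
    simpa using h1.fun_mul (hGderiv x)
  have hintD : IntervalIntegrable
      (fun x => 2 * u x * u' x * G x + u x ^ 2 * f x) volume 0 R := hA.add hB
  have hEq : (∫ x in (0:ℝ)..R, (2 * u x * u' x * G x + u x ^ 2 * f x)) = 0 := by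
    rw [intervalIntegral.integral_eq_sub_of_hasDerivAt hIBP hintD]
    simp [huR, hG0]
  rw [intervalIntegral.integral_add hA hB] at hEq
  -- pointwise AM-GM
  have key : ∀ x ∈ Icc (0:ℝ) R,
      -(2 * u x * u' x * G x) ≤ (1/2) * (u x ^ 2 * f x) + 2 * (u' x ^ 2 * G x ^ 2 / f x) := by
    intro x hx
    rcases eq_or_lt_of_le hx.1 with h0 | h0
    · have hG0' : G x = 0 := by rw [← h0]; exact hG0
      have hf0' : f x = 0 := by
        rw [← h0]; simp [hf, Real.zero_rpow hc0.ne']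
      simp [hG0', hf0']
    · have hfx : 0 < f x := hfpos x h0
      have h4 : (1/2) * (u x ^ 2 * f x) + 2 * (u' x ^ 2 * G x ^ 2 / f x)
          = (1/2) * (u x ^ 2 * f x) + (2 * u' x ^ 2 * G x ^ 2) / f x := by ring
      rw [h4, ← sub_le_iff_le_add', le_div_iff₀ hfx]
      nlinarith [sq_nonneg (f x * u x + 2 * u' x * G x), hfx]
  have hmono : (∫ x in (0:ℝ)..R, -(2 * u x * u' x * G x))
      ≤ ∫ x in (0:ℝ)..R, ((1/2) * (u x ^ 2 * f x) + 2 * (u' x ^ 2 * G x ^ 2 / f x)) :=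
    intervalIntegral.integral_mono_on hR.le hA.neg
      ((hB.const_mul (1/2)).add (hq.const_mul 2)) key
  rw [intervalIntegral.integral_neg, intervalIntegral.integral_add (hB.const_mul (1/2))
    (hq.const_mul 2), intervalIntegral.integral_const_mul, intervalIntegral.integral_const_mul]
    at hmono
  have main : (∫ x in (0:ℝ)..R, u x ^ 2 * f x)
      ≤ 4 * ∫ x in (0:ℝ)..R, u' x ^ 2 * G x ^ 2 / f x := by linarith
  simpa only [hf, hGdef] using main
end

section
/- (Second Pohozaev-type identity) Let n > 2, R > 0, p = (n+2)/(n−2), G(x) = ∫₀ˣ sinh(s)^{n−1} ds, and let u ∈ C²([0,R]) satisfy −u'' − (n−1)·coth(x)·u' = λu + |u|^{p−1}u on (0,R) with u'(0) = 0, u(R) = 0. Then u'(R)²·G(R)/2 + ∫₀ᴿ u'(x)²·((n−1)·G(x)·coth(x) − G'(x)/2) dx = (λ/2)·∫₀ᴿ u(x)²·G'(x) dx + (1/(p+1))·∫₀ᴿ |u(x)|^{p+1}·G'(x) dx. -/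
open Real Filter MeasureTheory intervalIntegral

lemma my_hasDerivAt_abs_rpow {q : ℝ} (hq : 1 < q) (t : ℝ) :
    HasDerivAt (fun s : ℝ => |s| ^ q) (q * |t| ^ (q - 1) * Real.sign t) t := by
  rcases lt_trichotomy t 0 with ht | ht | ht
  · have h1 : HasDerivAt (fun s : ℝ => (-s) ^ q) (q * (-t) ^ (q - 1) * (-1)) t := by
      have := (Real.hasDerivAt_rpow_const (x := -t) (p := q) (Or.inl (by linarith))).comp t
        (hasDerivAt_neg t)
      simpa [mul_comm, Function.comp_def] using this
    have h2 : (fun s : ℝ => |s| ^ q) =ᶠ[nhds t] (fun s : ℝ => (-s) ^ q) := by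
      filter_upwards [eventually_lt_nhds ht] with s hs
      rw [abs_of_neg hs]
    have h3 := h1.congr_of_eventuallyEq h2
    rw [Real.sign_of_neg ht, abs_of_neg ht]
    exact h3
  · subst ht
    rw [Real.sign_zero, mul_zero]
    rw [hasDerivAt_iff_tendsto_slope]
    have h1 : Tendsto (fun s : ℝ => |s| ^ (q - 1)) (nhds 0) (nhds 0) := by
      have hc : ContinuousAt (fun s : ℝ => |s| ^ (q - 1)) 0 := by
        have h0 : ContinuousAt (fun y : ℝ => y ^ (q - 1)) (|(0:ℝ)|) := by
          simpa using Real.continuousAt_rpow_const 0 (q - 1) (Or.inr (by linarith))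
        exact ContinuousAt.comp h0 (continuous_abs.continuousAt)
      simpa [Real.zero_rpow (show q - 1 ≠ 0 by linarith)] using hc.tendsto
    apply squeeze_zero_norm' (a := fun s : ℝ => |s| ^ (q - 1))
    · filter_upwards [self_mem_nhdsWithin] with s hs
      have hs' : s ≠ 0 := hs
      have habs : (0:ℝ) < |s| := abs_pos.2 hs'
      have hqe : |s| ^ q = |s| ^ (q - 1) * |s| := by
        rw [← Real.rpow_add_one habs.ne' (q - 1)]; ring_nf
      have hq0 : (q:ℝ) ≠ 0 := by linarith
      have hsl : slope (fun s : ℝ => |s| ^ q) 0 s = |s| ^ q / s := by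
        simp [slope_def_field, Real.zero_rpow hq0]
      rw [hsl]
      rw [Real.norm_eq_abs, abs_div, abs_of_nonneg (Real.rpow_nonneg (abs_nonneg s) q)]
      rw [hqe, mul_div_assoc, div_self habs.ne', mul_one]
    · exact h1.mono_left nhdsWithin_le_nhds
  · have h1 : HasDerivAt (fun s : ℝ => s ^ q) (q * t ^ (q - 1)) t :=
      Real.hasDerivAt_rpow_const (Or.inl (by linarith))
    have h2 : (fun s : ℝ => |s| ^ q) =ᶠ[nhds t] (fun s : ℝ => s ^ q) := by
      filter_upwards [eventually_gt_nhds ht] with s hs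
      rw [abs_of_pos hs]
    have h3 := h1.congr_of_eventuallyEq h2
    rw [Real.sign_of_pos ht, abs_of_pos ht, mul_one]
    exact h3

lemma my_abs_rpow_sign {p : ℝ} (hp1 : 1 < p) (t : ℝ) :
    |t| ^ p * Real.sign t = |t| ^ (p - 1) * t := by
  rcases lt_trichotomy t 0 with ht | ht | ht
  · rw [Real.sign_of_neg ht, abs_of_neg ht]
    have h : (-t) ^ p = (-t) ^ (p - 1) * (-t) := by
      rw [← Real.rpow_add_one (by linarith : (-t) ≠ 0)]; ring_nf
    rw [h]; ring
  · subst ht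
    simp [Real.zero_rpow (show p ≠ 0 by linarith)]
  · rw [Real.sign_of_pos ht, abs_of_pos ht, mul_one,
      ← Real.rpow_add_one ht.ne', sub_add_cancel]

theorem pohozaev_two (n R lam : ℝ) (hn : 2 < n) (hR : 0 < R)
    (p : ℝ) (hp : p = (n + 2) / (n - 2))
    (u u' u'' : ℝ → ℝ)
    (hu : ∀ x ∈ Set.Icc (0:ℝ) R, HasDerivAt u (u' x) x)
    (hu' : ∀ x ∈ Set.Icc (0:ℝ) R, HasDerivAt u' (u'' x) x)
    (hu'' : ContinuousOn u'' (Set.Icc (0:ℝ) R))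
    (hode : ∀ x ∈ Set.Ioo (0:ℝ) R,
      -u'' x - (n - 1) * (Real.cosh x / Real.sinh x) * u' x
        = lam * u x + |u x| ^ (p - 1) * u x)
    (hu'0 : u' 0 = 0) (huR : u R = 0) :
    u' R ^ 2 * (∫ s in (0:ℝ)..R, Real.sinh s ^ (n - 1)) / 2
      + ∫ x in (0:ℝ)..R, u' x ^ 2 *
          ((n - 1) * (∫ s in (0:ℝ)..x, Real.sinh s ^ (n - 1)) * (Real.cosh x / Real.sinh x)
            - Real.sinh x ^ (n - 1) / 2)
      = lam / 2 * (∫ x in (0:ℝ)..R, u x ^ 2 * Real.sinh x ^ (n - 1))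
        + 1 / (p + 1) * ∫ x in (0:ℝ)..R, |u x| ^ (p + 1) * Real.sinh x ^ (n - 1) := by
  have hn2 : (0:ℝ) < n - 2 := by linarith
  have hp1 : 1 < p := by
    rw [hp, lt_div_iff₀ hn2]; linarith
  have hpp0 : p + 1 ≠ 0 := by linarith
  set f : ℝ → ℝ := fun s => Real.sinh s ^ (n - 1) with hfdef
  have hfc : Continuous f :=
    (Real.continuous_rpow_const (by linarith : (0:ℝ) ≤ n - 1)).comp Real.continuous_sinh
  have hG : ∀ x : ℝ, HasDerivAt (fun t : ℝ => ∫ s in (0:ℝ)..t, f s) (f x) x := fun x =>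
    intervalIntegral.integral_hasDerivAt_right (hfc.intervalIntegrable 0 x)
      hfc.aestronglyMeasurable.stronglyMeasurableAtFilter hfc.continuousAt
  have hGcont : Continuous (fun t : ℝ => ∫ s in (0:ℝ)..t, f s) :=
    continuous_iff_continuousAt.2 fun x => (hG x).continuousAt
  have hucont : ContinuousOn u (Set.Icc 0 R) := fun x hx =>
    ((hu x hx).continuousAt).continuousWithinAt
  have hu'cont : ContinuousOn u' (Set.Icc 0 R) := fun x hx =>
    ((hu' x hx).continuousAt).continuousWithinAt
  have habs1 : Continuous (fun t : ℝ => |t| ^ (p - 1)) :=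
    (Real.continuous_rpow_const (by linarith : (0:ℝ) ≤ p - 1)).comp continuous_abs
  have habs2 : Continuous (fun t : ℝ => |t| ^ (p + 1)) :=
    (Real.continuous_rpow_const (by linarith : (0:ℝ) ≤ p + 1)).comp continuous_abs
  set Φ : ℝ → ℝ := fun x =>
    (u'' x * u' x + lam * (u x * u' x) + |u x| ^ (p - 1) * u x * u' x)
        * (∫ s in (0:ℝ)..x, f s)
      + (u' x ^ 2 / 2 + lam * u x ^ 2 / 2 + |u x| ^ (p + 1) / (p + 1)) * f x with hΦdef
  set H : ℝ → ℝ := fun x =>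
    (u' x ^ 2 / 2 + lam * u x ^ 2 / 2 + |u x| ^ (p + 1) / (p + 1))
      * (∫ s in (0:ℝ)..x, f s) with hHdef
  have hH : ∀ x ∈ Set.Icc (0:ℝ) R, HasDerivAt H (Φ x) x := by
    intro x hx
    have h1 := hu x hx
    have h2 := hu' x hx
    have hsq : HasDerivAt (fun y => u' y ^ 2) (2 * u' x * u'' x) x := by
      simpa using h2.fun_pow 2
    have husq : HasDerivAt (fun y => u y ^ 2) (2 * u x * u' x) x := by
      simpa using h1.fun_pow 2
    have habsd : HasDerivAt (fun y => |u y| ^ (p + 1))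
        ((p + 1) * (|u x| ^ (p - 1) * u x) * u' x) x := by
      have h := (my_hasDerivAt_abs_rpow (show (1:ℝ) < p + 1 by linarith) (u x)).comp x h1
      have hs : |u x| ^ (p + 1 - 1) * Real.sign (u x) = |u x| ^ (p - 1) * u x := by
        rw [show p + 1 - 1 = p by ring]
        exact my_abs_rpow_sign hp1 (u x)
      have h' : HasDerivAt (fun y => |u y| ^ (p + 1))
          ((p + 1) * |u x| ^ (p + 1 - 1) * Real.sign (u x) * u' x) x := h
      have heq : (p + 1) * |u x| ^ (p + 1 - 1) * Real.sign (u x) * u' x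
          = (p + 1) * (|u x| ^ (p - 1) * u x) * u' x := by
        linear_combination ((p + 1) * u' x) * hs
      rwa [heq] at h'
    have hA : HasDerivAt
        (fun y => u' y ^ 2 / 2 + lam * u y ^ 2 / 2 + |u y| ^ (p + 1) / (p + 1))
        (2 * u' x * u'' x / 2 + lam * (2 * u x * u' x) / 2
          + (p + 1) * (|u x| ^ (p - 1) * u x) * u' x / (p + 1)) x :=
      ((hsq.div_const 2).add ((husq.const_mul lam).div_const 2)).add (habsd.div_const (p + 1))
    have hD := hA.mul (hG x)
    have heq2 : Φ x = (2 * u' x * u'' x / 2 + lam * (2 * u x * u' x) / 2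
          + (p + 1) * (|u x| ^ (p - 1) * u x) * u' x / (p + 1)) * (∫ s in (0:ℝ)..x, f s)
        + (u' x ^ 2 / 2 + lam * u x ^ 2 / 2 + |u x| ^ (p + 1) / (p + 1)) * f x := by
      simp only [hΦdef]
      field_simp
    rw [hHdef, heq2]
    exact hD
  -- continuity of Φ
  have hΦcont : ContinuousOn Φ (Set.Icc (0:ℝ) R) := by
    rw [hΦdef]
    apply ContinuousOn.add
    · apply ContinuousOn.mul _ hGcont.continuousOn
      apply ContinuousOn.add
      apply ContinuousOn.add
      · exact hu''.mul hu'cont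
      · exact continuousOn_const.mul (hucont.mul hu'cont)
      · exact ((habs1.comp_continuousOn hucont).mul hucont).mul hu'cont
    · apply ContinuousOn.mul _ hfc.continuousOn
      apply ContinuousOn.add
      apply ContinuousOn.add
      · exact (hu'cont.pow 2).div_const 2
      · exact (continuousOn_const.mul (hucont.pow 2)).div_const 2
      · exact (habs2.comp_continuousOn hucont).div_const (p + 1)
  have hΦint : IntervalIntegrable Φ volume 0 R := by
    apply ContinuousOn.intervalIntegrable
    rwa [Set.uIcc_of_le hR.le]
  have hFTC : ∫ x in (0:ℝ)..R, Φ x = H R - H 0 := by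
    apply intervalIntegral.integral_eq_sub_of_hasDerivAt _ hΦint
    intro x hx
    rw [Set.uIcc_of_le hR.le] at hx
    exact hH x hx
  have hH0 : H 0 = 0 := by
    rw [hHdef]; simp
  have hHR : H R = u' R ^ 2 * (∫ s in (0:ℝ)..R, f s) / 2 := by
    rw [hHdef]
    simp [huR, Real.zero_rpow hpp0]
    ring
  -- the pointwise rewritten integrand
  set Ψ : ℝ → ℝ := fun x =>
    -(u' x ^ 2 * ((n - 1) * (∫ s in (0:ℝ)..x, f s) * (Real.cosh x / Real.sinh x) - f x / 2))
      + lam / 2 * (u x ^ 2 * f x) + 1 / (p + 1) * (|u x| ^ (p + 1) * f x) with hΨdef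
  have hEq : ∀ x ∈ Set.Ioo (0:ℝ) R, Φ x = Ψ x := by
    intro x hx
    have hode' := hode x hx
    simp only [hΦdef, hΨdef]
    linear_combination (-(u' x * (∫ s in (0:ℝ)..x, f s))) * hode'
  have hae : ∀ᵐ x : ℝ ∂volume, x ∈ Set.uIoc (0:ℝ) R → Φ x = Ψ x := by
    have hne : ∀ᵐ x : ℝ ∂volume, x ≠ R := by
      rw [MeasureTheory.ae_iff]
      simpa using Real.volume_singleton (a := R)
    filter_upwards [hne] with x hx hmem
    rw [Set.uIoc_of_le hR.le] at hmem
    exact hEq x ⟨hmem.1, lt_of_le_of_ne hmem.2 hx⟩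
  have hΨint : IntervalIntegrable Ψ volume 0 R :=
    hΦint.congr_ae ((MeasureTheory.ae_restrict_iff' measurableSet_uIoc).2 hae)
  have hIΨ : ∫ x in (0:ℝ)..R, Ψ x = ∫ x in (0:ℝ)..R, Φ x :=
    (intervalIntegral.integral_congr_ae hae).symm
  -- the three pieces
  set f1 : ℝ → ℝ := fun x => u' x ^ 2 *
      ((n - 1) * (∫ s in (0:ℝ)..x, f s) * (Real.cosh x / Real.sinh x) - f x / 2)
    with hf1def
  set f2 : ℝ → ℝ := fun x => u x ^ 2 * f x with hf2def
  set f3 : ℝ → ℝ := fun x => |u x| ^ (p + 1) * f x with hf3def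
  have hf2int : IntervalIntegrable f2 volume 0 R := by
    apply ContinuousOn.intervalIntegrable
    rw [Set.uIcc_of_le hR.le, hf2def]
    exact (hucont.pow 2).mul hfc.continuousOn
  have hf3int : IntervalIntegrable f3 volume 0 R := by
    apply ContinuousOn.intervalIntegrable
    rw [Set.uIcc_of_le hR.le, hf3def]
    exact (habs2.comp_continuousOn hucont).mul hfc.continuousOn
  have hf1int : IntervalIntegrable f1 volume 0 R := by
    have hrw : f1 = fun x => lam / 2 * f2 x + 1 / (p + 1) * f3 x - Ψ x := by
      funext x
      simp only [hf1def, hf2def, hf3def, hΨdef]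
      ring
    rw [hrw]
    exact ((hf2int.const_mul (lam / 2)).add (hf3int.const_mul (1 / (p + 1)))).sub hΨint
  have hsplit : ∫ x in (0:ℝ)..R, Ψ x
      = -(∫ x in (0:ℝ)..R, f1 x) + (lam / 2 * (∫ x in (0:ℝ)..R, f2 x)
        + 1 / (p + 1) * (∫ x in (0:ℝ)..R, f3 x)) := by
    have hrw : Ψ = fun x => (lam / 2 * f2 x + 1 / (p + 1) * f3 x) - f1 x := by
      funext x
      simp only [hf1def, hf2def, hf3def, hΨdef]
      ring
    simp only [hrw]
    rw [intervalIntegral.integral_sub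
        ((hf2int.const_mul (lam / 2)).add (hf3int.const_mul (1 / (p + 1)))) hf1int,
      intervalIntegral.integral_add (hf2int.const_mul (lam / 2))
        (hf3int.const_mul (1 / (p + 1))),
      intervalIntegral.integral_const_mul, intervalIntegral.integral_const_mul]
    ring
  have hfinal : u' R ^ 2 * (∫ s in (0:ℝ)..R, f s) / 2
      = -(∫ x in (0:ℝ)..R, f1 x) + (lam / 2 * (∫ x in (0:ℝ)..R, f2 x)
        + 1 / (p + 1) * (∫ x in (0:ℝ)..R, f3 x)) := by
    rw [← hsplit, hIΨ, hFTC, hHR, hH0, sub_zero]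
  show u' R ^ 2 * (∫ s in (0:ℝ)..R, f s) / 2 + (∫ x in (0:ℝ)..R, f1 x)
      = lam / 2 * (∫ x in (0:ℝ)..R, f2 x) + 1 / (p + 1) * ∫ x in (0:ℝ)..R, f3 x
  linarith
end

section
/- (Combined Pohozaev identity) Under the hypotheses of the two Pohozaev identities, with L(x) = (n−1)·G(x)·coth(x) − (1/2 + 1/(p+1))·G'(x), one has ∫₀ᴿ u'(x)²·L(x) dx + u'(R)²·G(R)/2 = (λ/n)·∫₀ᴿ u(x)²·sinh(x)^{n−1} dx. -/
open Real Set Filter MeasureTheory intervalIntegral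

lemma abs_rpow_hasDerivAt {q : ℝ} (hq : 1 < q) (t : ℝ) :
    HasDerivAt (fun s : ℝ => |s| ^ q) (q * |t| ^ (q - 2) * t) t := by
  have hq0 : q ≠ 0 := by linarith
  rcases lt_trichotomy t 0 with ht | rfl | ht
  · have hne : -t ≠ 0 := by intro h; nlinarith [neg_eq_zero.1 h]
    have h1 : HasDerivAt (fun s : ℝ => (-s) ^ q) (q * (-t) ^ (q - 1) * (-1)) t := by
      have h0 := (Real.hasDerivAt_rpow_const (x := -t) (p := q) (Or.inl hne)).comp t
        ((hasDerivAt_id t).neg)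
      exact h0
    have h2 : (fun s : ℝ => |s| ^ q) =ᶠ[nhds t] fun s : ℝ => (-s) ^ q := by
      filter_upwards [Iio_mem_nhds ht] with s hs
      rw [abs_of_neg hs]
    have h3 : HasDerivAt (fun s : ℝ => |s| ^ q) (q * (-t) ^ (q - 1) * (-1)) t :=
      h1.congr_of_eventuallyEq h2
    convert h3 using 1
    rw [abs_of_neg ht, show q - 1 = q - 2 + 1 by ring, Real.rpow_add_one hne]
    ring
  · have h0 : (q : ℝ) * |(0:ℝ)| ^ (q - 2) * 0 = 0 := by ring
    rw [h0, hasDerivAt_iff_tendsto_slope]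
    have key : ∀ᶠ s in nhdsWithin (0:ℝ) {(0:ℝ)}ᶜ,
        ‖slope (fun s : ℝ => |s| ^ q) 0 s‖ ≤ |s| ^ (q - 1) := by
      filter_upwards [self_mem_nhdsWithin] with s hs
      have hs0 : s ≠ 0 := hs
      have habs : |s| ≠ 0 := abs_ne_zero.2 hs0
      rw [slope_def_field]
      simp only [abs_zero, Real.zero_rpow hq0, sub_zero]
      rw [Real.norm_eq_abs, abs_div, abs_of_nonneg (Real.rpow_nonneg (abs_nonneg s) q),
        Real.rpow_sub_one habs]
    refine squeeze_zero_norm' key ?_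
    have hc : Continuous fun s : ℝ => |s| ^ (q - 1) :=
      (Real.continuous_rpow_const (by linarith)).comp continuous_abs
    have h := (hc.tendsto 0).mono_left (nhdsWithin_le_nhds (s := {(0:ℝ)}ᶜ))
    simpa [Real.zero_rpow (show q - 1 ≠ 0 by linarith)] using h
  · have hne : t ≠ 0 := ht.ne'
    have h1 := Real.hasDerivAt_rpow_const (x := t) (p := q) (Or.inl hne)
    have h2 : (fun s : ℝ => |s| ^ q) =ᶠ[nhds t] fun s : ℝ => s ^ q := by
      filter_upwards [Ioi_mem_nhds ht] with s hs
      rw [abs_of_pos hs]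
    have h3 : HasDerivAt (fun s : ℝ => |s| ^ q) (q * t ^ (q - 1)) t :=
      h1.congr_of_eventuallyEq h2
    convert h3 using 1
    rw [abs_of_pos ht, show q - 1 = q - 2 + 1 by ring, Real.rpow_add_one hne]
    ring

theorem pohozaev_combined (n R lam : ℝ) (hn : 2 < n) (hR : 0 < R)
    (p : ℝ) (hp : p = (n + 2) / (n - 2))
    (u u' u'' : ℝ → ℝ)
    (hu : ∀ x ∈ Set.Icc (0:ℝ) R, HasDerivAt u (u' x) x)
    (hu' : ∀ x ∈ Set.Icc (0:ℝ) R, HasDerivAt u' (u'' x) x)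
    (hu'' : ContinuousOn u'' (Set.Icc (0:ℝ) R))
    (hode : ∀ x ∈ Set.Ioo (0:ℝ) R,
      -u'' x - (n - 1) * (Real.cosh x / Real.sinh x) * u' x
        = lam * u x + |u x| ^ (p - 1) * u x)
    (hu'0 : u' 0 = 0) (huR : u R = 0)
    (hlim : Filter.Tendsto (fun x => u' x * Real.sinh x ^ (n - 1))
      (nhdsWithin 0 (Set.Ioi 0)) (nhds 0)) :
    (∫ x in (0:ℝ)..R, u' x ^ 2 *
        ((n - 1) * (∫ s in (0:ℝ)..x, Real.sinh s ^ (n - 1)) * (Real.cosh x / Real.sinh x)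
          - (1 / 2 + 1 / (p + 1)) * Real.sinh x ^ (n - 1)))
      + u' R ^ 2 * (∫ s in (0:ℝ)..R, Real.sinh s ^ (n - 1)) / 2
      = lam / n * ∫ x in (0:ℝ)..R, u x ^ 2 * Real.sinh x ^ (n - 1) := by
  have hn2 : (0:ℝ) < n - 2 := by linarith
  have hn1 : (0:ℝ) < n - 1 := by linarith
  have hn0 : (0:ℝ) < n := by linarith
  have hp1 : 1 < p := by rw [hp, lt_div_iff₀ hn2]; linarith
  have hp10 : p + 1 ≠ 0 := by linarith
  have hpm : (0:ℝ) < p - 1 := by linarith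
  have hpn : 1 / 2 - 1 / (p + 1) = 1 / n := by
    rw [hp]
    rw [div_add' _ _ _ hn2.ne']
    rw [div_div_eq_mul_div, one_mul]
    have h2n : n + 2 + (n - 2) = 2 * n := by ring
    field_simp
    ring
  suffices key : ∀ S G : ℝ → ℝ,
      S = (fun x => Real.sinh x ^ (n - 1)) →
      G = (fun x => ∫ s in (0:ℝ)..x, S s) →
      (∫ x in (0:ℝ)..R, u' x ^ 2 *
          ((n - 1) * G x * (Real.cosh x / Real.sinh x) - (1 / 2 + 1 / (p + 1)) * S x))
        + u' R ^ 2 * G R / 2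
        = lam / n * ∫ x in (0:ℝ)..R, u x ^ 2 * S x by
    exact key _ _ rfl rfl
  intro S G hSd hGd
  have hSx : ∀ x, S x = Real.sinh x ^ (n - 1) := fun x => by rw [hSd]
  have hGx : ∀ x, G x = ∫ s in (0:ℝ)..x, S s := fun x => by rw [hGd]
  have hScont : Continuous S := by
    rw [hSd]; exact (Real.continuous_rpow_const hn1.le).comp Real.continuous_sinh
  have hSnn : ∀ x, 0 ≤ x → 0 ≤ S x := fun x hx => by
    rw [hSx]; exact Real.rpow_nonneg (Real.sinh_nonneg_iff.2 hx) _
  have hS0 : S 0 = 0 := by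
    rw [hSx]; simp [Real.zero_rpow hn1.ne']
  have hSmono : ∀ s x : ℝ, 0 ≤ s → s ≤ x → S s ≤ S x := fun s x hs hsx => by
    rw [hSx, hSx]
    exact Real.rpow_le_rpow (Real.sinh_nonneg_iff.2 hs) (Real.sinh_le_sinh.2 hsx) hn1.le
  have hSint : ∀ a b : ℝ, IntervalIntegrable S volume a b :=
    fun a b => hScont.intervalIntegrable a b
  have hGder : ∀ x : ℝ, HasDerivAt G (S x) x := by
    intro x
    rw [hGd]
    exact intervalIntegral.integral_hasDerivAt_right (hSint 0 x)
      (hScont.stronglyMeasurable.stronglyMeasurableAtFilter) hScont.continuousAt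
  have hGcont : Continuous G := continuous_iff_continuousAt.2 fun x => (hGder x).continuousAt
  have hG0 : G 0 = 0 := by rw [hGx]; exact intervalIntegral.integral_same
  have hGnn : ∀ x, 0 ≤ x → 0 ≤ G x := fun x hx => by
    rw [hGx]
    exact intervalIntegral.integral_nonneg hx fun s hs => hSnn s hs.1
  have hGle : ∀ x, 0 ≤ x → G x ≤ x * S x := by
    intro x hx
    rw [hGx]
    calc (∫ s in (0:ℝ)..x, S s) ≤ ∫ _ in (0:ℝ)..x, S x := by
          apply intervalIntegral.integral_mono_on hx (hSint 0 x) intervalIntegrable_const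
          intro s hs
          exact hSmono s x hs.1 hs.2
      _ = x * S x := by simp [mul_comm]
  have hSder : ∀ x : ℝ, 0 < x →
      HasDerivAt S ((n - 1) * S x * (Real.cosh x / Real.sinh x)) x := by
    intro x hx
    have hs : 0 < Real.sinh x := Real.sinh_pos_iff.2 hx
    have h1 : HasDerivAt (fun y => Real.sinh y ^ (n - 1))
        ((n - 1) * Real.sinh x ^ (n - 1 - 1) * Real.cosh x) x :=
      (Real.hasDerivAt_rpow_const (x := Real.sinh x) (p := n - 1) (Or.inl hs.ne')).comp x
        (Real.hasDerivAt_sinh x)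
    rw [hSd]
    convert h1 using 1
    rw [Real.rpow_sub_one hs.ne']
    field_simp
  have hucont : ContinuousOn u (Icc 0 R) := fun x hx => (hu x hx).continuousAt.continuousWithinAt
  have hu'cont : ContinuousOn u' (Icc 0 R) := fun x hx => (hu' x hx).continuousAt.continuousWithinAt
  have mem0 : (0:ℝ) ∈ Icc (0:ℝ) R := ⟨le_refl 0, hR.le⟩
  have memR : R ∈ Icc (0:ℝ) R := ⟨hR.le, le_refl R⟩
  have habs_cont : Continuous fun t : ℝ => |t| ^ (p + 1) :=
    (Real.continuous_rpow_const (by linarith)).comp continuous_abs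
  have habs2 : ∀ t : ℝ, |t| ^ (p - 1) * t ^ 2 = |t| ^ (p + 1) := by
    intro t
    rcases eq_or_ne t 0 with rfl | ht
    · simp [Real.zero_rpow (show p - 1 ≠ 0 by linarith),
        Real.zero_rpow (show p + 1 ≠ 0 by linarith)]
    · have h2 : t ^ 2 = |t| ^ ((2:ℕ):ℝ) := by rw [Real.rpow_natCast, sq_abs]
      rw [h2, ← Real.rpow_add (abs_pos.2 ht)]
      congr 1
      push_cast
      ring
  have hFder : ∀ t : ℝ, HasDerivAt (fun t : ℝ => lam * t ^ 2 / 2 + |t| ^ (p + 1) / (p + 1))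
      (lam * t + |t| ^ (p - 1) * t) t := by
    intro t
    have h1 : HasDerivAt (fun t : ℝ => lam * t ^ 2 / 2) (lam * (2 * t ^ 1) / 2) t :=
      ((hasDerivAt_pow 2 t).const_mul lam).div_const 2
    have h2 := (abs_rpow_hasDerivAt (by linarith : 1 < p + 1) t).div_const (p + 1)
    have h3 := h1.add h2
    refine h3.congr_deriv (Eq.symm ?_)
    rw [show p + 1 - 2 = p - 1 by ring, pow_one]
    field_simp
  -- continuity of G x * coth x on [0, R]
  have hgc : ContinuousOn (fun x => G x * (Real.cosh x / Real.sinh x)) (Icc 0 R) := by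
    intro x hx
    rcases eq_or_lt_of_le hx.1 with h0 | hx0
    · subst h0
      have key : Tendsto (fun y => G y * (Real.cosh y / Real.sinh y))
          (nhdsWithin 0 (Icc 0 R)) (nhds 0) := by
        apply squeeze_zero' (g := fun y => S y * Real.cosh y)
        · filter_upwards [self_mem_nhdsWithin] with y hy
          exact mul_nonneg (hGnn y hy.1)
            (div_nonneg (Real.cosh_pos _).le (Real.sinh_nonneg_iff.2 hy.1))
        · filter_upwards [self_mem_nhdsWithin] with y hy
          rcases eq_or_lt_of_le hy.1 with h0 | h0
          · rw [← h0]
            simp [hG0, hS0]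
          · have hsy : 0 < Real.sinh y := Real.sinh_pos_iff.2 h0
            have h1 : G y ≤ Real.sinh y * S y := by
              calc G y ≤ y * S y := hGle y hy.1
                _ ≤ Real.sinh y * S y :=
                    mul_le_mul_of_nonneg_right (Real.self_le_sinh_iff.2 hy.1) (hSnn y hy.1)
            calc G y * (Real.cosh y / Real.sinh y) = G y * Real.cosh y / Real.sinh y := by
                  ring
              _ ≤ Real.sinh y * S y * Real.cosh y / Real.sinh y := by
                  apply div_le_div_of_nonneg_right ?_ hsy.le
                  exact mul_le_mul_of_nonneg_right h1 (Real.cosh_pos _).le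
              _ = S y * Real.cosh y := by
                  field_simp
        · have hc : Continuous fun y => S y * Real.cosh y := hScont.mul Real.continuous_cosh
          have h := (hc.tendsto 0).mono_left (nhdsWithin_le_nhds (s := Icc (0:ℝ) R))
          simpa [hS0] using h
      show Tendsto _ _ (nhds (G 0 * (Real.cosh 0 / Real.sinh 0)))
      rw [hG0, zero_mul]
      exact key
    · apply ContinuousAt.continuousWithinAt
      exact (hGcont.continuousAt).mul
        (Real.continuous_cosh.continuousAt.div Real.continuous_sinh.continuousAt
          (Real.sinh_pos_iff.2 hx0).ne')
  have hgc' : ContinuousOn (fun x => (n - 1) * G x * (Real.cosh x / Real.sinh x)) (Icc 0 R) := by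
    have h := hgc.const_smul (n - 1)
    simpa [Pi.smul_def, smul_eq_mul, mul_assoc] using h
  -- the two integrands
  set i1 : ℝ → ℝ := fun x => u' x ^ 2 * S x - (lam * (u x ^ 2 * S x) + |u x| ^ (p + 1) * S x)
    with hi1def
  set i2 : ℝ → ℝ := fun x => -(u' x ^ 2 * ((n - 1) * G x * (Real.cosh x / Real.sinh x)))
      + (1 / 2 * (u' x ^ 2 * S x)
        + (lam / 2 * (u x ^ 2 * S x) + 1 / (p + 1) * (|u x| ^ (p + 1) * S x)))
    with hi2def
  have hcontu'S : ContinuousOn (fun x => u' x ^ 2 * S x) (Icc 0 R) :=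
    (hu'cont.pow 2).mul hScont.continuousOn
  have hcontuS : ContinuousOn (fun x => u x ^ 2 * S x) (Icc 0 R) :=
    (hucont.pow 2).mul hScont.continuousOn
  have hcontabsS : ContinuousOn (fun x => |u x| ^ (p + 1) * S x) (Icc 0 R) := by
    have h : ContinuousOn (fun x => |u x| ^ (p + 1)) (Icc 0 R) :=
      habs_cont.comp_continuousOn hucont
    exact h.mul hScont.continuousOn
  have hcont1 : ContinuousOn i1 (Icc 0 R) :=
    hcontu'S.sub ((continuousOn_const.mul hcontuS).add hcontabsS)
  have hcont2 : ContinuousOn i2 (Icc 0 R) :=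
    ((hu'cont.pow 2).mul hgc').neg.add ((continuousOn_const.mul hcontu'S).add
      ((continuousOn_const.mul hcontuS).add (continuousOn_const.mul hcontabsS)))
  have huIcc : uIcc (0:ℝ) R = Icc 0 R := uIcc_of_le hR.le
  have hi1int : IntervalIntegrable i1 volume 0 R :=
    ContinuousOn.intervalIntegrable (huIcc ▸ hcont1)
  have hi2int : IntervalIntegrable i2 volume 0 R :=
    ContinuousOn.intervalIntegrable (huIcc ▸ hcont2)
  have hjint : IntervalIntegrable (fun x => u x ^ 2 * S x) volume 0 R :=
    ContinuousOn.intervalIntegrable (huIcc ▸ hcontuS)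
  -- first identity (multiply by u)
  have hI1 : (∫ x in (0:ℝ)..R, i1 x) = 0 - 0 := by
    apply intervalIntegral.integral_eq_sub_of_hasDerivAt_of_tendsto hR
      (f := fun y => u' y * S y * u y) ?_ hi1int ?_ ?_
    · intro x hx
      have hx' : x ∈ Icc (0:ℝ) R := Ioo_subset_Icc_self hx
      have h1 := ((hu' x hx').mul (hSder x hx.1)).mul (hu x hx')
      refine h1.congr_deriv (Eq.symm ?_)
      rw [hi1def]
      simp only [Pi.mul_apply]
      linear_combination (S x * u x) * hode x hx + S x * habs2 (u x)
    · have h1 : Tendsto u (nhdsWithin 0 (Ioi 0)) (nhds (u 0)) :=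
        ((hu 0 mem0).continuousAt.tendsto).mono_left nhdsWithin_le_nhds
      have h2 := hlim.mul h1
      rw [zero_mul] at h2
      have h3 : (fun x => u' x * Real.sinh x ^ (n - 1) * u x)
          = fun y => u' y * S y * u y := by
        funext y; rw [hSx]
      rwa [h3] at h2
    · have hcont : ContinuousAt (fun y => u' y * S y * u y) R :=
        (((hu' R memR).continuousAt).mul hScont.continuousAt).mul (hu R memR).continuousAt
      have h := hcont.tendsto.mono_left (nhdsWithin_le_nhds (s := Iio R))
      simpa [huR] using h
  -- second identity (Pohozaev: multiply by G u')
  have hI2 : (∫ x in (0:ℝ)..R, i2 x) = u' R ^ 2 * G R / 2 - 0 := by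
    apply intervalIntegral.integral_eq_sub_of_hasDerivAt_of_tendsto hR
      (f := fun y => u' y ^ 2 * G y / 2
        + G y * (lam * u y ^ 2 / 2 + |u y| ^ (p + 1) / (p + 1))) ?_ hi2int ?_ ?_
    · intro x hx
      have hx' : x ∈ Icc (0:ℝ) R := Ioo_subset_Icc_self hx
      have h1 := (((hu' x hx').pow 2).mul (hGder x)).div_const 2
      have h2' : HasDerivAt (fun y => lam * u y ^ 2 / 2 + |u y| ^ (p + 1) / (p + 1))
          ((lam * u x + |u x| ^ (p - 1) * u x) * u' x) x :=
        (hFder (u x)).comp x (hu x hx')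
      have h3 := h1.add ((hGder x).mul h2')
      refine h3.congr_deriv (Eq.symm ?_)
      rw [hi2def]
      simp only [Pi.mul_apply, Pi.pow_apply, Nat.cast_ofNat, Nat.reduceSub, pow_one]
      linear_combination (G x * u' x) * hode x hx
    · have hcont : ContinuousAt (fun y => u' y ^ 2 * G y / 2
          + G y * (lam * u y ^ 2 / 2 + |u y| ^ (p + 1) / (p + 1))) 0 := by
        have hau : ContinuousAt (fun y => |u y| ^ (p + 1)) 0 :=
          habs_cont.continuousAt.comp (hu 0 mem0).continuousAt
        exact ((((hu' 0 mem0).continuousAt.pow 2).mul hGcont.continuousAt).div_const 2).add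
          (hGcont.continuousAt.mul
            (((((hu 0 mem0).continuousAt.pow 2).const_mul lam).div_const 2).add
              (hau.div_const (p + 1))))
      have h := hcont.tendsto.mono_left (nhdsWithin_le_nhds (s := Ioi (0:ℝ)))
      simpa [hG0] using h
    · have hcont : ContinuousAt (fun y => u' y ^ 2 * G y / 2
          + G y * (lam * u y ^ 2 / 2 + |u y| ^ (p + 1) / (p + 1))) R := by
        have hau : ContinuousAt (fun y => |u y| ^ (p + 1)) R :=
          habs_cont.continuousAt.comp (hu R memR).continuousAt
        exact ((((hu' R memR).continuousAt.pow 2).mul hGcont.continuousAt).div_const 2).add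
          (hGcont.continuousAt.mul
            (((((hu R memR).continuousAt.pow 2).const_mul lam).div_const 2).add
              (hau.div_const (p + 1))))
      have h := hcont.tendsto.mono_left (nhdsWithin_le_nhds (s := Iio R))
      have hz : |u R| ^ (p + 1) = 0 := by
        rw [huR, abs_zero, Real.zero_rpow hp10]
      simpa [huR, Real.zero_rpow hp10] using h
  -- split the target integral
  have hsplit : (∫ x in (0:ℝ)..R, u' x ^ 2 *
        ((n - 1) * G x * (Real.cosh x / Real.sinh x) - (1 / 2 + 1 / (p + 1)) * S x))
      = -(∫ x in (0:ℝ)..R, i2 x) - (1 / (p + 1)) * (∫ x in (0:ℝ)..R, i1 x)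
        + (lam / n) * ∫ x in (0:ℝ)..R, u x ^ 2 * S x := by
    have hi2neg : IntervalIntegrable (fun x => -i2 x) volume 0 R := hi2int.neg
    have hi1c : IntervalIntegrable (fun x => 1 / (p + 1) * i1 x) volume 0 R :=
      hi1int.const_mul _
    have hjc : IntervalIntegrable (fun x => lam / n * (u x ^ 2 * S x)) volume 0 R :=
      hjint.const_mul _
    rw [← intervalIntegral.integral_neg, ← intervalIntegral.integral_const_mul (1 / (p + 1)) i1,
      ← intervalIntegral.integral_const_mul (lam / n) (fun x => u x ^ 2 * S x),
      ← intervalIntegral.integral_sub hi2neg hi1c,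
      ← intervalIntegral.integral_add (hi2neg.sub hi1c) hjc]
    apply intervalIntegral.integral_congr
    intro x _
    rw [hi1def, hi2def]
    linear_combination (lam * (u x ^ 2 * S x)) * hpn
  rw [hsplit, hI1, hI2]
  ring
end

section
/- For n > 2, as x → 0⁺ one has g(x) = x^{n+2}·(1/(np) − σ/n) + O(x^{n+4}), where g(x) = (n−2)·cosh(x)·m(x) − σ·G(x)·sinh(x)², m(x) = G(x)·cosh(x) − sinh(x)^n/n, G(x) = ∫₀ˣ sinh(s)^{n−1} ds, and p = (n+2)/(n−2); in particular if σ < 1/p then g is positive on some interval (0,δ). -/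
set_option maxHeartbeats 1600000

open Real Set MeasureTheory

lemma sinh_taylor {x : ℝ} (hx : 0 ≤ x) (hx1 : x ≤ 1) :
    |Real.sinh x - (x + x^3/6)| ≤ x^5 := by
  have hb1 := Real.exp_bound (x := x) (by rwa [abs_of_nonneg hx]) (n := 5) (by norm_num)
  have hb2 := Real.exp_bound (x := -x) (by rwa [abs_neg, abs_of_nonneg hx]) (n := 5) (by norm_num)
  simp only [Finset.sum_range_succ, Finset.sum_range_zero] at hb1 hb2
  norm_num [Nat.factorial] at hb1 hb2
  rw [abs_of_nonneg hx] at hb1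
  rw [abs_of_nonneg hx] at hb2
  rw [Real.sinh_eq, abs_le] at *
  constructor <;> nlinarith [hb1.1, hb1.2, hb2.1, hb2.2, pow_nonneg hx 5]

lemma cosh_taylor {x : ℝ} (hx : 0 ≤ x) (hx1 : x ≤ 1) :
    |Real.cosh x - (1 + x^2/2)| ≤ x^4 := by
  have hb1 := Real.exp_bound (x := x) (by rwa [abs_of_nonneg hx]) (n := 4) (by norm_num)
  have hb2 := Real.exp_bound (x := -x) (by rwa [abs_neg, abs_of_nonneg hx]) (n := 4) (by norm_num)
  simp only [Finset.sum_range_succ, Finset.sum_range_zero] at hb1 hb2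
  norm_num [Nat.factorial] at hb1 hb2
  rw [abs_of_nonneg hx] at hb1
  rw [abs_of_nonneg hx] at hb2
  rw [Real.cosh_eq, abs_le] at *
  constructor <;> nlinarith [hb1.1, hb1.2, hb2.1, hb2.2, pow_nonneg hx 4]

lemma rpow_deriv_bound {a t : ℝ} (ha : 1 ≤ a) (ht : 0 ≤ t) (ht1 : t ≤ 1) :
    1 ≤ (1 + t) ^ (a - 1) ∧ (1 + t) ^ (a - 1) ≤ 1 + Real.exp a * t := by
  have ha1 : (0:ℝ) ≤ a - 1 := by linarith
  have h1t : (0:ℝ) < 1 + t := by linarith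
  constructor
  · exact Real.one_le_rpow (by linarith) ha1
  · have h2 : (1 + t) ^ (a - 1) ≤ Real.exp t ^ (a - 1) :=
      Real.rpow_le_rpow (by linarith) (by linarith [Real.add_one_le_exp t]) ha1
    have h3 : Real.exp t ^ (a - 1) = Real.exp (t * (a - 1)) := by
      rw [← Real.exp_mul]
    -- convexity: exp (s * a) ≤ 1 + s * (exp a - 1) for s = t*(a-1)/a ∈ [0,1]
    have hapos : (0:ℝ) < a := by linarith
    set s : ℝ := t * (a - 1) / a with hs
    have hs0 : 0 ≤ s := by positivity
    have hs1 : s ≤ 1 := by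
      rw [div_le_one hapos]; nlinarith
    have hconv := convexOn_exp.2 (Set.mem_univ (0:ℝ)) (Set.mem_univ a)
      (by linarith : (0:ℝ) ≤ 1 - s) hs0 (by ring)
    have hsa : s * a = t * (a - 1) := by
      rw [hs]; field_simp
    have hconv' : Real.exp (t * (a - 1)) ≤ (1 - s) + s * Real.exp a := by
      have h' : Real.exp (s * a) ≤ (1 - s) + s * Real.exp a := by simpa using hconv
      rwa [hsa] at h'
    have hexp1 : 1 ≤ Real.exp a := by
      have := Real.add_one_le_exp a; linarith
    calc (1 + t) ^ (a - 1) ≤ Real.exp (t * (a - 1)) := by rw [← h3]; exact h2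
      _ ≤ 1 - s + s * Real.exp a := hconv'
      _ ≤ 1 + Real.exp a * t := by
        have : s ≤ t := by rw [hs, div_le_iff₀ hapos]; nlinarith
        nlinarith

lemma rpow_taylor2 {a u : ℝ} (ha : 1 ≤ a) (hu : 0 ≤ u) (hu1 : u ≤ 1) :
    |(1 + u) ^ a - 1 - a * u| ≤ a * Real.exp a * u ^ 2 := by
  have hderiv : ∀ t ∈ Set.uIcc (0:ℝ) u, HasDerivAt (fun t => (1 + t) ^ a) (a * (1 + t) ^ (a - 1)) t := by
    intro t ht
    rw [Set.uIcc_of_le hu, Set.mem_Icc] at ht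
    have h1t : (0:ℝ) < 1 + t := by linarith
    have := (HasDerivAt.rpow_const (p := a) ((hasDerivAt_id t).const_add 1) (Or.inl h1t.ne'))
    simpa using this
  have hcont : ContinuousOn (fun t : ℝ => a * (1 + t) ^ (a - 1)) (Set.uIcc 0 u) := by
    apply ContinuousOn.mul continuousOn_const
    exact ((Real.continuous_rpow_const (by linarith)).comp (continuous_const.add continuous_id)).continuousOn
  have hint : IntervalIntegrable (fun t : ℝ => a * (1 + t) ^ (a - 1)) MeasureTheory.volume 0 u :=
    hcont.intervalIntegrable
  have hftc := intervalIntegral.integral_eq_sub_of_hasDerivAt hderiv hint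
  simp only [add_zero, Real.one_rpow] at hftc
  -- bounds on the integral
  have hlow : a * u ≤ ∫ t in (0:ℝ)..u, a * (1 + t) ^ (a - 1) := by
    have : ∫ t in (0:ℝ)..u, a ≤ ∫ t in (0:ℝ)..u, a * (1 + t) ^ (a - 1) := by
      apply intervalIntegral.integral_mono_on hu intervalIntegrable_const hint
      intro t ht
      have h := rpow_deriv_bound ha ht.1 (le_trans ht.2 hu1)
      nlinarith [h.1]
    simpa [mul_comm] using this
  have hhigh : (∫ t in (0:ℝ)..u, a * (1 + t) ^ (a - 1)) ≤ a * u + a * Real.exp a * (u ^ 2 / 2) := by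
    have : (∫ t in (0:ℝ)..u, a * (1 + t) ^ (a - 1)) ≤ ∫ t in (0:ℝ)..u, (a + a * Real.exp a * t) := by
      apply intervalIntegral.integral_mono_on hu hint
      · exact (by continuity : Continuous fun t : ℝ => a + a * Real.exp a * t).intervalIntegrable 0 u
      intro t ht
      have h := rpow_deriv_bound ha ht.1 (le_trans ht.2 hu1)
      have hea : 0 < Real.exp a := Real.exp_pos a
      nlinarith [h.2]
    have hc : (∫ t in (0:ℝ)..u, (a + a * Real.exp a * t)) = a * u + a * Real.exp a * (u ^ 2 / 2) := by
      rw [intervalIntegral.integral_add intervalIntegrable_const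
        ((by continuity : Continuous fun t : ℝ => a * Real.exp a * t).intervalIntegrable 0 u),
        intervalIntegral.integral_const_mul, integral_id]
      simp [smul_eq_mul]; ring
    linarith [this, hc.le]
  have hea : 0 < Real.exp a := Real.exp_pos a
  rw [abs_le]
  constructor <;> nlinarith [hftc, hlow, hhigh, sq_nonneg u]

lemma sinh_rpow_taylor {a x : ℝ} (ha : 1 ≤ a) (hx : 0 < x) (hx2 : x ≤ 1/2) :
    |Real.sinh x ^ a - (x ^ a + a/6 * (x ^ a * x^2))| ≤ (a * Real.exp a + a) * (x ^ a * x^4) := by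
  have hx1 : x ≤ 1 := by linarith
  have hs : x < Real.sinh x := Real.self_lt_sinh_iff.2 hx
  have hspos : 0 < Real.sinh x := by linarith
  have h1 := sinh_taylor hx.le hx1
  obtain ⟨u, hu_def⟩ : ∃ u : ℝ, u = Real.sinh x / x - 1 := ⟨_, rfl⟩
  have h1u : 1 + u = Real.sinh x / x := by rw [hu_def]; ring
  have hu0 : 0 ≤ u := by
    rw [hu_def]
    have : 1 ≤ Real.sinh x / x := (one_le_div hx).2 hs.le
    linarith
  have huE : |u - x^2/6| ≤ x^4 := by
    have heq : u - x^2/6 = (Real.sinh x - (x + x^3/6)) / x := by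
      rw [hu_def]; field_simp; ring
    rw [heq, abs_div, abs_of_pos hx, div_le_iff₀ hx]
    calc |Real.sinh x - (x + x^3/6)| ≤ x^5 := h1
      _ = x^4 * x := by ring
  have hxx : x^2 ≤ 1/4 := by nlinarith
  have hu_le : u ≤ x^2 := by
    have := (abs_le.1 huE).2
    nlinarith [mul_le_mul_of_nonneg_left hxx (pow_nonneg hx.le 2), pow_nonneg hx.le 2, pow_nonneg hx.le 4]
  have hu1 : u ≤ 1 := by nlinarith
  have hu2 : u^2 ≤ x^4 := by nlinarith
  have key := rpow_taylor2 ha hu0 hu1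
  have hxa : (0:ℝ) < x ^ a := Real.rpow_pos_of_pos hx a
  have hspow : Real.sinh x ^ a = x ^ a * (1 + u) ^ a := by
    rw [h1u, Real.div_rpow hspos.le hx.le, mul_div_cancel₀ _ (ne_of_gt hxa)]
  have hea : 0 < Real.exp a := Real.exp_pos a
  have hexpand : Real.sinh x ^ a - (x ^ a + a/6 * (x ^ a * x^2))
      = x ^ a * (((1 + u) ^ a - 1 - a * u) + a * (u - x^2/6)) := by
    rw [hspow]; ring
  rw [hexpand, abs_mul, abs_of_pos hxa]
  have habs : |((1 + u) ^ a - 1 - a * u) + a * (u - x^2/6)|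
      ≤ (a * Real.exp a + a) * x^4 := by
    calc |((1 + u) ^ a - 1 - a * u) + a * (u - x^2/6)|
        ≤ |(1 + u) ^ a - 1 - a * u| + |a * (u - x^2/6)| := abs_add_le _ _
      _ ≤ a * Real.exp a * u^2 + a * |u - x^2/6| := by
          rw [abs_mul, abs_of_pos (by linarith : (0:ℝ) < a)]
          exact add_le_add key le_rfl
      _ ≤ a * Real.exp a * x^4 + a * x^4 :=
          add_le_add (mul_le_mul_of_nonneg_left hu2 (by positivity))
            (mul_le_mul_of_nonneg_left huE (by linarith))
      _ = (a * Real.exp a + a) * x^4 := by ring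
  calc x ^ a * |((1 + u) ^ a - 1 - a * u) + a * (u - x^2/6)|
      ≤ x ^ a * ((a * Real.exp a + a) * x^4) :=
        mul_le_mul_of_nonneg_left habs hxa.le
    _ = (a * Real.exp a + a) * (x ^ a * x^4) := by ring

lemma G_taylor {n x : ℝ} (hn : 2 < n) (hx : 0 < x) (hx2 : x ≤ 1/2) :
    |(∫ s in (0:ℝ)..x, Real.sinh s ^ (n-1))
      - (x ^ n / n + (n-1)/(6*(n+2)) * (x ^ n * x^2))|
      ≤ ((n-1) * Real.exp (n-1) + (n-1)) * (x ^ n * x^4) := by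
  have ha : (1:ℝ) ≤ n - 1 := by linarith
  have ha0 : (0:ℝ) ≤ n - 1 := by linarith
  set K : ℝ := (n-1) * Real.exp (n-1) + (n-1) with hK
  have hK0 : 0 < K := by
    have := Real.exp_pos (n-1); rw [hK]; nlinarith
  -- continuity facts
  have hcf : Continuous (fun t : ℝ => Real.sinh t ^ (n-1)) :=
    (Real.continuous_rpow_const ha0).comp Real.continuous_sinh
  have hc1 : Continuous (fun t : ℝ => t ^ (n-1)) := Real.continuous_rpow_const ha0
  have hc2 : Continuous (fun t : ℝ => t ^ (n+1)) := Real.continuous_rpow_const (by linarith)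
  have hc3 : Continuous (fun t : ℝ => t ^ (n+3)) := Real.continuous_rpow_const (by linarith)
  have hif : IntervalIntegrable (fun t : ℝ => Real.sinh t ^ (n-1)) volume 0 x :=
    hcf.intervalIntegrable 0 x
  have hiP : IntervalIntegrable (fun t : ℝ => t ^ (n-1) + (n-1)/6 * t ^ (n+1)) volume 0 x :=
    (hc1.add (continuous_const.mul hc2)).intervalIntegrable 0 x
  -- the integral of P
  have hrp1 : (∫ t in (0:ℝ)..x, t ^ (n-1)) = x ^ n / n := by
    rw [integral_rpow (Or.inl (by linarith : (-1:ℝ) < n - 1)),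
      show n - 1 + 1 = n by ring, Real.zero_rpow (by linarith : n ≠ 0)]
    ring
  have hrp2 : (∫ t in (0:ℝ)..x, t ^ (n+1)) = x ^ (n+2) / (n+2) := by
    rw [integral_rpow (Or.inl (by linarith : (-1:ℝ) < n + 1)),
      show n + 1 + 1 = n + 2 by ring, Real.zero_rpow (by linarith : n + 2 ≠ 0)]
    ring
  have hiP_val : (∫ t in (0:ℝ)..x, (t ^ (n-1) + (n-1)/6 * t ^ (n+1)))
      = x ^ n / n + (n-1)/(6*(n+2)) * x ^ (n+2) := by
    rw [intervalIntegral.integral_add (g := fun t : ℝ => (n-1)/6 * t ^ (n+1)) (hc1.intervalIntegrable 0 x)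
      ((continuous_const.mul hc2).intervalIntegrable 0 x),
      intervalIntegral.integral_const_mul, hrp1, hrp2]
    field_simp
  -- pointwise bound
  have hpt : ∀ t ∈ Set.uIoc (0:ℝ) x,
      ‖Real.sinh t ^ (n-1) - (t ^ (n-1) + (n-1)/6 * t ^ (n+1))‖ ≤ K * t ^ (n+3) := by
    intro t ht
    rw [Set.uIoc_of_le hx.le] at ht
    have ht0 : 0 < t := ht.1
    have ht2 : t ≤ 1/2 := le_trans ht.2 hx2
    have h := sinh_rpow_taylor ha ht0 ht2
    have e1 : t ^ (n+1) = t ^ (n-1) * t^2 := by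
      rw [← Real.rpow_natCast t 2, ← Real.rpow_add ht0]; congr 1; push_cast; ring
    have e2 : t ^ (n+3) = t ^ (n-1) * t^4 := by
      rw [← Real.rpow_natCast t 4, ← Real.rpow_add ht0]; congr 1; push_cast; ring
    rw [Real.norm_eq_abs, e1, e2]
    calc |Real.sinh t ^ (n-1) - (t ^ (n-1) + (n-1)/6 * (t ^ (n-1) * t^2))|
        ≤ ((n-1) * Real.exp (n-1) + (n-1)) * (t ^ (n-1) * t^4) := h
      _ = K * (t ^ (n-1) * t^4) := by rw [hK]
  have hbith : IntervalIntegrable (fun t : ℝ => K * t ^ (n+3)) volume 0 x :=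
    (continuous_const.mul hc3).intervalIntegrable 0 x
  have hrp3 : (∫ t in (0:ℝ)..x, K * t ^ (n+3)) = K * (x ^ (n+4) / (n+4)) := by
    rw [intervalIntegral.integral_const_mul,
      integral_rpow (Or.inl (by linarith : (-1:ℝ) < n + 3)),
      show n + 3 + 1 = n + 4 by ring, Real.zero_rpow (by linarith : n + 4 ≠ 0)]
    ring
  have hdiff : ‖∫ t in (0:ℝ)..x,
      (Real.sinh t ^ (n-1) - (t ^ (n-1) + (n-1)/6 * t ^ (n+1)))‖
      ≤ K * (x ^ (n+4) / (n+4)) := by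
    have h0 := intervalIntegral.norm_integral_le_abs_of_norm_le
      (f := fun t : ℝ => Real.sinh t ^ (n-1) - (t ^ (n-1) + (n-1)/6 * t ^ (n+1)))
      (g := fun t : ℝ => K * t ^ (n+3))
      ((ae_restrict_iff' measurableSet_uIoc).2 (ae_of_all _ hpt)) hbith
    rwa [hrp3, abs_of_nonneg (mul_nonneg hK0.le (by positivity))] at h0
  have hsplit : (∫ t in (0:ℝ)..x,
      (Real.sinh t ^ (n-1) - (t ^ (n-1) + (n-1)/6 * t ^ (n+1))))
      = (∫ s in (0:ℝ)..x, Real.sinh s ^ (n-1))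
        - (x ^ n / n + (n-1)/(6*(n+2)) * x ^ (n+2)) := by
    rw [intervalIntegral.integral_sub hif hiP, hiP_val]
  have hxn2 : x ^ (n+2) = x ^ n * x^2 := by
    rw [← Real.rpow_natCast x 2, ← Real.rpow_add hx]; norm_num
  have hxn4 : x ^ (n+4) = x ^ n * x^4 := by
    rw [← Real.rpow_natCast x 4, ← Real.rpow_add hx]; norm_num
  rw [hsplit, hxn2, hxn4, Real.norm_eq_abs] at hdiff
  have hfrac : K * (x ^ n * x^4 / (n+4)) ≤ K * (x ^ n * x^4) := by
    apply mul_le_mul_of_nonneg_left _ hK0.le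
    have hxn : (0:ℝ) ≤ x ^ n * x^4 := by positivity
    rw [div_le_iff₀ (by linarith : (0:ℝ) < n+4)]
    nlinarith
  calc |(∫ s in (0:ℝ)..x, Real.sinh s ^ (n-1))
      - (x ^ n / n + (n-1)/(6*(n+2)) * (x ^ n * x^2))|
      ≤ K * (x ^ n * x^4 / (n+4)) := hdiff
    _ ≤ K * (x ^ n * x^4) := hfrac

lemma g_err_bound {n : ℝ} (hn : 2 < n) {σ : ℝ} (hσ : 0 < σ) :
    ∃ C > 0, ∀ x ∈ Set.Ioc (0:ℝ) (1/2),
      |((n - 2) * Real.cosh x *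
            ((∫ s in (0:ℝ)..x, Real.sinh s ^ (n - 1)) * Real.cosh x - Real.sinh x ^ n / n)
          - σ * (∫ s in (0:ℝ)..x, Real.sinh s ^ (n - 1)) * Real.sinh x ^ 2)
        - x ^ (n + 2) * ((n-2)/(n*(n+2)) - σ/n)|
        ≤ C * x ^ (n + 4) := by
  have hn0 : (0:ℝ) < n := by linarith
  have hn0' : n ≠ 0 := ne_of_gt hn0
  have hn2 : (0:ℝ) < n + 2 := by linarith
  have hn2' : n + 2 ≠ 0 := ne_of_gt hn2
  obtain ⟨K1, hK1pos, hK1spec⟩ : ∃ K : ℝ, 0 < K ∧ ∀ y : ℝ, 0 < y → y ≤ 1/2 →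
      |(∫ s in (0:ℝ)..y, Real.sinh s ^ (n-1))
        - (y ^ n / n + (n-1)/(6*(n+2)) * (y ^ n * y^2))| ≤ K * (y ^ n * y^4) :=
    ⟨(n-1) * Real.exp (n-1) + (n-1),
      by nlinarith [Real.exp_pos (n-1)],
      fun y hy1 hy2 => G_taylor hn hy1 hy2⟩
  obtain ⟨K2, hK2pos, hK2spec⟩ : ∃ K : ℝ, 0 < K ∧ ∀ y : ℝ, 0 < y → y ≤ 1/2 →
      |Real.sinh y ^ n - (y ^ n + n/6 * (y ^ n * y^2))| ≤ K * (y ^ n * y^4) :=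
    ⟨n * Real.exp n + n,
      by nlinarith [Real.exp_pos n],
      fun y hy1 hy2 => sinh_rpow_taylor (by linarith : (1:ℝ) ≤ n) hy1 hy2⟩
  refine ⟨(n-2)*(2*(3+2*K1+K2)) + 1 + σ*(4+2*K1), by nlinarith, ?_⟩
  intro x hx
  obtain ⟨hx0, hx2⟩ := hx
  have hx1 : x ≤ 1 := by linarith
  have hX0 : (0:ℝ) ≤ x ^ n := Real.rpow_nonneg hx0.le n
  have hX1 : x ^ n ≤ 1 := Real.rpow_le_one hx0.le hx1 hn0.le
  have hx21 : x^2 ≤ 1/4 := by nlinarith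
  have hx41 : x^4 ≤ 1/16 := by nlinarith
  have hx61 : x^6 ≤ x^4/4 := by
    nlinarith [mul_le_mul_of_nonneg_left hx21 (pow_nonneg hx0.le 4)]
  have hx81 : x^8 ≤ x^6 := by
    nlinarith [mul_le_mul_of_nonneg_left hx21 (pow_nonneg hx0.le 6)]
  have hx101 : x^10 ≤ x^6 := by
    nlinarith [mul_le_mul_of_nonneg_left hx41 (pow_nonneg hx0.le 6)]
  have hxn2 : x ^ (n+2) = x ^ n * x^2 := by
    rw [← Real.rpow_natCast x 2, ← Real.rpow_add hx0]; norm_num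
  have hxn4 : x ^ (n+4) = x ^ n * x^4 := by
    rw [← Real.rpow_natCast x 4, ← Real.rpow_add hx0]; norm_num
  -- error terms
  obtain ⟨eG, heG⟩ : ∃ e, (∫ s in (0:ℝ)..x, Real.sinh s ^ (n-1))
      = x ^ n / n + (n-1)/(6*(n+2)) * (x ^ n * x^2) + e :=
    ⟨(∫ s in (0:ℝ)..x, Real.sinh s ^ (n-1)) - (x ^ n / n + (n-1)/(6*(n+2)) * (x ^ n * x^2)),
      by ring⟩
  have hbG : |eG| ≤ K1 * (x ^ n * x^4) := by
    have h := hK1spec x hx0 hx2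
    have heq : eG = (∫ s in (0:ℝ)..x, Real.sinh s ^ (n-1))
        - (x ^ n / n + (n-1)/(6*(n+2)) * (x ^ n * x^2)) := by rw [heG]; ring
    rw [heq]
    exact h
  obtain ⟨ec, hec⟩ : ∃ e, Real.cosh x = 1 + x^2/2 + e :=
    ⟨Real.cosh x - (1 + x^2/2), by ring⟩
  have hbc : |ec| ≤ x^4 := by
    have h := cosh_taylor hx0.le hx1
    have : ec = Real.cosh x - (1 + x^2/2) := by rw [hec]; ring
    rw [this]; exact h
  obtain ⟨en, hen⟩ : ∃ e, Real.sinh x ^ n = x ^ n + n/6 * (x ^ n * x^2) + e :=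
    ⟨Real.sinh x ^ n - (x ^ n + n/6 * (x ^ n * x^2)), by ring⟩
  have hbn : |en| ≤ K2 * (x ^ n * x^4) := by
    have h := hK2spec x hx0 hx2
    have heq : en = Real.sinh x ^ n - (x ^ n + n/6 * (x ^ n * x^2)) := by rw [hen]; ring
    rw [heq]
    exact h
  obtain ⟨es, hes⟩ : ∃ e, Real.sinh x ^ 2 = x^2 + x^4/3 + e :=
    ⟨Real.sinh x ^ 2 - (x^2 + x^4/3), by ring⟩
  have hbs : |es| ≤ 3 * x^6 := by
    have hd := sinh_taylor hx0.le hx1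
    obtain ⟨d, hdd⟩ : ∃ d, Real.sinh x = x + x^3/6 + d :=
      ⟨Real.sinh x - (x + x^3/6), by ring⟩
    have hdb : |d| ≤ x^5 := by
      have : d = Real.sinh x - (x + x^3/6) := by rw [hdd]; ring
      rw [this]; exact hd
    have hesd : es = x^6/36 + d*(2*x + x^3/3 + d) := by
      have h1 : es = Real.sinh x ^ 2 - (x^2 + x^4/3) := by rw [hes]; ring
      rw [h1, hdd]; ring
    obtain ⟨hd1, hd2⟩ := abs_le.1 hdb
    have habs2 : |2*x + x^3/3 + d| ≤ 2*x + x^3/3 + x^5 := by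
      rw [abs_le]
      constructor <;> linarith [pow_nonneg hx0.le 3, pow_nonneg hx0.le 5, hx0.le]
    have hprod : |d * (2*x + x^3/3 + d)| ≤ x^5 * (2*x + x^3/3 + x^5) := by
      rw [abs_mul]
      exact mul_le_mul hdb habs2 (abs_nonneg _) (pow_nonneg hx0.le 5)
    calc |es| = |x^6/36 + d*(2*x + x^3/3 + d)| := by rw [hesd]
      _ ≤ |x^6/36| + |d*(2*x + x^3/3 + d)| := abs_add_le _ _
      _ ≤ x^6/36 + x^5 * (2*x + x^3/3 + x^5) := by
          rw [abs_of_nonneg (by positivity)]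
          linarith
      _ ≤ 3 * x^6 := by nlinarith [pow_nonneg hx0.le 6]
  -- m-identity
  obtain ⟨em, hemdef, hm⟩ : ∃ e, e = (n-1)/(6*(n+2)) * (x ^ n * x^4)/2
        + (x ^ n/n + (n-1)/(6*(n+2)) * (x ^ n * x^2)) * ec
        + eG * (1 + x^2/2 + ec) - en/n
      ∧ (∫ s in (0:ℝ)..x, Real.sinh s ^ (n-1)) * Real.cosh x - Real.sinh x ^ n / n
        = x ^ n * x^2 / (n*(n+2)) + e := by
    refine ⟨_, rfl, ?_⟩
    rw [heG, hec, hen]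
    field_simp
    ring
  -- bound on em
  have hb0 : (0:ℝ) ≤ (n-1)/(6*(n+2)) := div_nonneg (by linarith) (by linarith)
  have hb6 : (n-1)/(6*(n+2)) ≤ 1/6 := by
    rw [div_le_div_iff₀ (by linarith) (by norm_num)]; nlinarith
  have hY0 : (0:ℝ) ≤ x ^ n * x^4 := by positivity
  have hx21' : x^2 ≤ 1 := by linarith
  have hx42 : x^4 ≤ x^2/4 := by
    nlinarith [mul_le_mul_of_nonneg_left hx21 (sq_nonneg x)]
  have hXn : x ^ n / n ≤ x ^ n := by
    rw [div_le_iff₀ hn0]; nlinarith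
  have hXx2 : x ^ n * x^2 ≤ x ^ n := by
    nlinarith [mul_le_mul_of_nonneg_left hx21' hX0]
  have hXx42 : x ^ n * x^4 ≤ x ^ n * x^2 := by
    nlinarith [mul_le_mul_of_nonneg_left hx21' (mul_nonneg hX0 (sq_nonneg x))]
  have hch2 : |1 + x^2/2 + ec| ≤ 2 := by
    rw [abs_le]
    constructor <;> linarith [(abs_le.1 hbc).1, (abs_le.1 hbc).2, sq_nonneg x, hx21, hx41]
  have hbm : |em| ≤ (3+2*K1+K2) * (x ^ n * x^4) := by
    have ht1 : |(n-1)/(6*(n+2)) * (x ^ n * x^4)/2| ≤ x ^ n * x^4 := by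
      rw [abs_of_nonneg (div_nonneg (mul_nonneg hb0 hY0) (by norm_num))]
      linarith [mul_le_mul_of_nonneg_right hb6 hY0, hY0]
    have ht2 : |(x ^ n/n + (n-1)/(6*(n+2)) * (x ^ n * x^2)) * ec| ≤ 2*(x ^ n * x^4) := by
      rw [abs_mul]
      have hf : |x ^ n/n + (n-1)/(6*(n+2)) * (x ^ n * x^2)| ≤ 2 * x ^ n := by
        rw [abs_of_nonneg (add_nonneg (div_nonneg hX0 hn0.le)
          (mul_nonneg hb0 (mul_nonneg hX0 (sq_nonneg x))))]
        linarith [mul_le_mul_of_nonneg_right hb6 (mul_nonneg hX0 (sq_nonneg x)),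
          mul_nonneg hX0 (sq_nonneg x), hXn, hXx2]
      calc |x ^ n/n + (n-1)/(6*(n+2)) * (x ^ n * x^2)| * |ec| ≤ (2 * x ^ n) * x^4 :=
          mul_le_mul hf hbc (abs_nonneg _) (by positivity)
        _ = 2*(x ^ n * x^4) := by ring
    have ht3 : |eG * (1 + x^2/2 + ec)| ≤ 2*(K1*(x ^ n * x^4)) := by
      rw [abs_mul]
      calc |eG| * |1 + x^2/2 + ec| ≤ (K1*(x ^ n * x^4)) * 2 :=
          mul_le_mul hbG hch2 (abs_nonneg _) (mul_nonneg hK1pos.le hY0)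
        _ = 2*(K1*(x ^ n * x^4)) := by ring
    have ht4 : |en/n| ≤ K2*(x ^ n * x^4) := by
      rw [abs_div, abs_of_pos hn0, div_le_iff₀ hn0]
      calc |en| ≤ K2*(x ^ n * x^4) := hbn
        _ ≤ K2*(x ^ n * x^4) * n := by
            linarith [mul_le_mul_of_nonneg_left (by linarith : (1:ℝ) ≤ n)
              (mul_nonneg hK2pos.le hY0)]
    obtain ⟨h11, h12⟩ := abs_le.1 ht1
    obtain ⟨h21, h22⟩ := abs_le.1 ht2
    obtain ⟨h31, h32⟩ := abs_le.1 ht3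
    obtain ⟨h41, h42⟩ := abs_le.1 ht4
    rw [hemdef, abs_le]
    constructor <;> linarith
  -- main identity
  have hT : ((n - 2) * Real.cosh x *
        ((∫ s in (0:ℝ)..x, Real.sinh s ^ (n - 1)) * Real.cosh x - Real.sinh x ^ n / n)
      - σ * (∫ s in (0:ℝ)..x, Real.sinh s ^ (n - 1)) * Real.sinh x ^ 2)
      - (x ^ n * x^2) * ((n-2)/(n*(n+2)) - σ/n)
      = (n-2) * ((1 + x^2/2 + ec) * em)
        + (n-2)/(n*(n+2)) * ((x^2/2 + ec) * (x ^ n * x^2))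
        - σ * ((x ^ n/n) * (x^4/3 + es)
            + ((n-1)/(6*(n+2)) * (x ^ n * x^2) + eG) * (x^2 + x^4/3 + es)) := by
    rw [show n - 1 = n - 1 from rfl, hm, heG, hec, hes]
    field_simp
    ring
  -- bounds on main pieces
  have hP1 : |(n-2) * ((1 + x^2/2 + ec) * em)| ≤ (n-2)*(2*((3+2*K1+K2) * (x ^ n * x^4))) := by
    rw [abs_mul, abs_of_nonneg (by linarith : (0:ℝ) ≤ n-2)]
    apply mul_le_mul_of_nonneg_left _ (by linarith : (0:ℝ) ≤ n-2)
    rw [abs_mul]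
    exact mul_le_mul hch2 hbm (abs_nonneg _) (by norm_num)
  have hP2 : |(n-2)/(n*(n+2)) * ((x^2/2 + ec) * (x ^ n * x^2))| ≤ x ^ n * x^4 := by
    have hc20 : (0:ℝ) ≤ (n-2)/(n*(n+2)) := div_nonneg (by linarith)
      (mul_nonneg hn0.le (by linarith))
    have hc21 : (n-2)/(n*(n+2)) ≤ 1 := by
      rw [div_le_one (mul_pos hn0 hn2)]; nlinarith [sq_nonneg n]
    have hw : |x^2/2 + ec| ≤ x^2 := by
      rw [abs_le]
      constructor <;> linarith [(abs_le.1 hbc).1, (abs_le.1 hbc).2, sq_nonneg x]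
    rw [abs_mul, abs_of_nonneg hc20, abs_mul]
    calc (n-2)/(n*(n+2)) * (|x^2/2 + ec| * |x ^ n * x^2|)
        ≤ 1 * (x^2 * (x ^ n * x^2)) := by
          apply mul_le_mul hc21 _ (mul_nonneg (abs_nonneg _) (abs_nonneg _)) one_pos.le
          rw [abs_of_nonneg (by positivity : (0:ℝ) ≤ x ^ n * x^2)]
          exact mul_le_mul_of_nonneg_right hw (by positivity)
      _ = x ^ n * x^4 := by ring
  have hR : |(x ^ n/n) * (x^4/3 + es)
      + ((n-1)/(6*(n+2)) * (x ^ n * x^2) + eG) * (x^2 + x^4/3 + es)|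
      ≤ (4+2*K1) * (x ^ n * x^4) := by
    have hr1 : |(x ^ n/n) * (x^4/3 + es)| ≤ 2*(x ^ n * x^4) := by
      rw [abs_mul, abs_of_nonneg (div_nonneg hX0 hn0.le)]
      have hA : |x^4/3 + es| ≤ 2 * x^4 := by
        rw [abs_le]
        constructor <;> linarith [(abs_le.1 hbs).1, (abs_le.1 hbs).2, hx61, pow_nonneg hx0.le 4]
      calc (x ^ n/n) * |x^4/3 + es| ≤ x ^ n * (2*x^4) :=
          mul_le_mul hXn hA (abs_nonneg _) hX0
        _ = 2*(x ^ n * x^4) := by ring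
    have hr2 : |((n-1)/(6*(n+2)) * (x ^ n * x^2) + eG) * (x^2 + x^4/3 + es)|
        ≤ 2*(1+K1)*(x ^ n * x^4) := by
      rw [abs_mul]
      have hA : |(n-1)/(6*(n+2)) * (x ^ n * x^2) + eG| ≤ (1+K1) * (x ^ n * x^2) := by
        rw [abs_le]
        have hbb := mul_le_mul_of_nonneg_right hb6 (mul_nonneg hX0 (sq_nonneg x))
        constructor <;>
          linarith [(abs_le.1 hbG).1, (abs_le.1 hbG).2, hXx42,
            mul_nonneg hK1pos.le (mul_nonneg hX0 (sq_nonneg x)), mul_nonneg hX0 (sq_nonneg x),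
            mul_le_mul_of_nonneg_left hXx42 hK1pos.le, hbb,
            mul_nonneg hb0 (mul_nonneg hX0 (sq_nonneg x))]
      have hB : |x^2 + x^4/3 + es| ≤ 2 * x^2 := by
        rw [abs_le]
        constructor <;> linarith [(abs_le.1 hbs).1, (abs_le.1 hbs).2, hx61, hx42,
          sq_nonneg x, pow_nonneg hx0.le 4]
      calc |(n-1)/(6*(n+2)) * (x ^ n * x^2) + eG| * |x^2 + x^4/3 + es|
          ≤ ((1+K1) * (x ^ n * x^2)) * (2*x^2) :=
            mul_le_mul hA hB (abs_nonneg _)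
              (mul_nonneg (by linarith) (mul_nonneg hX0 (sq_nonneg x)))
        _ = 2*(1+K1)*(x ^ n * (x^2*x^2)) := by ring
        _ = 2*(1+K1)*(x ^ n * x^4) := by ring
    obtain ⟨h11, h12⟩ := abs_le.1 hr1
    obtain ⟨h21, h22⟩ := abs_le.1 hr2
    rw [abs_le]
    constructor <;> linarith
  have hP3 : |σ * ((x ^ n/n) * (x^4/3 + es)
      + ((n-1)/(6*(n+2)) * (x ^ n * x^2) + eG) * (x^2 + x^4/3 + es))|
      ≤ σ * ((4+2*K1) * (x ^ n * x^4)) := by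
    rw [abs_mul, abs_of_pos hσ]
    exact mul_le_mul_of_nonneg_left hR hσ.le
  rw [hxn2, hxn4, hT, abs_le]
  obtain ⟨h11, h12⟩ := abs_le.1 hP1
  obtain ⟨h21, h22⟩ := abs_le.1 hP2
  obtain ⟨h31, h32⟩ := abs_le.1 hP3
  constructor <;> linarith

theorem g_asymptotics (n : ℝ) (hn : 2 < n) (p : ℝ) (hp : p = (n + 2) / (n - 2))
    (σ : ℝ) (hσ : 0 < σ) :
    ((fun x : ℝ =>
        ((n - 2) * Real.cosh x *
            ((∫ s in (0:ℝ)..x, Real.sinh s ^ (n - 1)) * Real.cosh x - Real.sinh x ^ n / n)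
          - σ * (∫ s in (0:ℝ)..x, Real.sinh s ^ (n - 1)) * Real.sinh x ^ 2)
        - x ^ (n + 2) * (1 / (n * p) - σ / n))
      =O[nhdsWithin 0 (Set.Ioi 0)] fun x : ℝ => x ^ (n + 4))
    ∧ (σ < 1 / p → ∃ δ > 0, ∀ x ∈ Set.Ioo (0:ℝ) δ,
        0 < (n - 2) * Real.cosh x *
            ((∫ s in (0:ℝ)..x, Real.sinh s ^ (n - 1)) * Real.cosh x - Real.sinh x ^ n / n)
          - σ * (∫ s in (0:ℝ)..x, Real.sinh s ^ (n - 1)) * Real.sinh x ^ 2) := by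
  have hn2 : (0:ℝ) < n - 2 := by linarith
  have hn0 : (0:ℝ) < n := by linarith
  have hn2' : (0:ℝ) < n + 2 := by linarith
  have hc1 : 1 / (n * p) = (n-2)/(n*(n+2)) := by
    rw [hp]; field_simp
  obtain ⟨C, hC, hbound⟩ := g_err_bound hn hσ
  constructor
  · rw [Asymptotics.isBigO_iff]
    refine ⟨C, ?_⟩
    filter_upwards [Ioc_mem_nhdsGT (by norm_num : (0:ℝ) < 1/2)] with x hx
    rw [Real.norm_eq_abs, Real.norm_eq_abs, hc1,
      abs_of_pos (Real.rpow_pos_of_pos hx.1 (n+4))]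
    exact hbound x hx
  · intro hσp
    have h1p : 1/p = (n-2)/(n+2) := by rw [hp, one_div_div]
    rw [h1p] at hσp
    have hcid : (n-2)/(n*(n+2)) - σ/n = ((n-2)/(n+2) - σ)/n := by
      field_simp
    have hcpos : 0 < (n-2)/(n*(n+2)) - σ/n := by
      rw [hcid]; exact div_pos (by linarith) hn0
    obtain ⟨c, hcdef⟩ : ∃ c : ℝ, c = (n-2)/(n*(n+2)) - σ/n := ⟨_, rfl⟩
    rw [← hcdef] at hcpos
    refine ⟨min (1/2) (Real.sqrt (c/C)),
      lt_min (by norm_num) (Real.sqrt_pos.2 (div_pos hcpos hC)), ?_⟩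
    intro x hx
    obtain ⟨hx0, hxd⟩ := hx
    have hx12 : x ≤ 1/2 := le_of_lt (lt_of_lt_of_le hxd (min_le_left _ _))
    have hxs : x < Real.sqrt (c/C) := lt_of_lt_of_le hxd (min_le_right _ _)
    have hx2c : x^2 < c/C := (Real.lt_sqrt hx0.le).1 hxs
    have hCx : C * x^2 < c := by
      have := (lt_div_iff₀ hC).1 hx2c
      linarith
    have hb := hbound x ⟨hx0, hx12⟩
    rw [← hcdef] at hb
    have hlow := (abs_le.1 hb).1
    have hxx : x ^ (n+4) = x ^ (n+2) * x^2 := by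
      rw [show (n+4:ℝ) = (n+2)+2 by ring, ← Real.rpow_natCast x 2,
        ← Real.rpow_add hx0]; norm_num
    have hp2 : 0 < x ^ (n+2) := Real.rpow_pos_of_pos hx0 _
    rw [hxx] at hlow
    nlinarith [mul_pos hp2 (show (0:ℝ) < c - C*x^2 by linarith), hlow]
end

section
/- (Lower bound on λ for existence) Let 2 < n, R > 0, p = (n+2)/(n−2), and suppose u ∈ C²([0,R]) is a nontrivial solution of −u'' − (n−1)·coth(x)·u' = λu + |u|^{p−1}u on (0,R) with u'(0) = 0 and u(R) = 0. Then λ ≥ n(n−1)·(∫₀ᴿ u'² L dx)/(∫₀ᴿ u² G' dx), where G(x) = ∫₀ˣ sinh(s)^{n−1} ds and L(x) = G(x)·coth(x) − G'(x)/n. -/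
open Real MeasureTheory intervalIntegral Set

set_option maxHeartbeats 2000000 in
theorem lambda_lower_bound (n R lam : ℝ) (hn : 2 < n) (hR : 0 < R)
    (p : ℝ) (hp : p = (n + 2) / (n - 2))
    (u u' u'' : ℝ → ℝ)
    (hu : ∀ x ∈ Set.Icc (0:ℝ) R, HasDerivAt u (u' x) x)
    (hu' : ∀ x ∈ Set.Icc (0:ℝ) R, HasDerivAt u' (u'' x) x)
    (hu'' : ContinuousOn u'' (Set.Icc (0:ℝ) R))
    (hode : ∀ x ∈ Set.Ioo (0:ℝ) R,
      -u'' x - (n - 1) * (Real.cosh x / Real.sinh x) * u' x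
        = lam * u x + |u x| ^ (p - 1) * u x)
    (hu'0 : u' 0 = 0) (huR : u R = 0)
    (hnontriv : ∃ x ∈ Set.Icc (0:ℝ) R, u x ≠ 0) :
    lam ≥ n * (n - 1) *
        (∫ x in (0:ℝ)..R, u' x ^ 2 *
          ((∫ s in (0:ℝ)..x, Real.sinh s ^ (n - 1)) * (Real.cosh x / Real.sinh x)
            - Real.sinh x ^ (n - 1) / n))
      / ∫ x in (0:ℝ)..R, u x ^ 2 * Real.sinh x ^ (n - 1) := by
  have hn2 : (0:ℝ) < n - 2 := by linarith
  have hn0 : (0:ℝ) < n := by linarith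
  have hn1 : (0:ℝ) < n - 1 := by linarith
  -- basic objects
  set G : ℝ → ℝ := fun t => ∫ s in (0:ℝ)..t, Real.sinh s ^ (n - 1) with hGdef
  set S : ℝ → ℝ := fun t => Real.sinh t ^ (n - 1) with hSdef
  have hfoldG : ∀ x : ℝ, (∫ s in (0:ℝ)..x, Real.sinh s ^ (n - 1)) = G x := fun _ => rfl
  have hfoldS : ∀ x : ℝ, Real.sinh x ^ (n - 1) = S x := fun _ => rfl
  simp only [hfoldG, hfoldS]
  have hScont : Continuous S := by
    exact (Real.continuous_rpow_const (by linarith)).comp Real.continuous_sinh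
  have hSnonneg : ∀ x : ℝ, 0 ≤ x → 0 ≤ S x := fun x hx =>
    Real.rpow_nonneg (Real.sinh_nonneg_iff.2 hx) _
  have hSpos : ∀ x : ℝ, 0 < x → 0 < S x := fun x hx =>
    Real.rpow_pos_of_pos (Real.sinh_pos_iff.2 hx) _
  have hG : ∀ t : ℝ, HasDerivAt G (S t) t := fun t =>
    intervalIntegral.integral_hasDerivAt_right (hScont.intervalIntegrable 0 t)
      hScont.stronglyMeasurable.stronglyMeasurableAtFilter hScont.continuousAt
  have hGcont : Continuous G := by
    rw [continuous_iff_continuousAt]; exact fun t => (hG t).continuousAt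
  have hG0 : G 0 = 0 := intervalIntegral.integral_same
  have hGnonneg : ∀ x : ℝ, 0 ≤ x → 0 ≤ G x := fun x hx =>
    intervalIntegral.integral_nonneg hx (fun s hs => Real.rpow_nonneg
      (Real.sinh_nonneg_iff.2 hs.1) _)
  have hucont : ContinuousOn u (Icc 0 R) := fun x hx => (hu x hx).continuousAt.continuousWithinAt
  have hu'cont : ContinuousOn u' (Icc 0 R) := fun x hx => (hu' x hx).continuousAt.continuousWithinAt
  -- continuity of G x * coth x on [0, R]
  have hGbound : ∀ y ∈ Icc (0:ℝ) R, G y * (Real.cosh y / Real.sinh y)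
      ≤ y * Real.sinh y ^ (n - 2) * Real.cosh y := by
    intro y hy
    rcases eq_or_lt_of_le hy.1 with h0 | h0
    · rw [← h0]; simp [hG0]
    · have hs : 0 < Real.sinh y := Real.sinh_pos_iff.2 h0
      have hGle : G y ≤ y * S y := by
        have := intervalIntegral.integral_mono_on (μ := volume) h0.le
          ((hScont.continuousOn (s := Icc 0 y)).intervalIntegrable_of_Icc h0.le)
          (continuousOn_const.intervalIntegrable_of_Icc h0.le)
          (fun s hs' => by
            exact Real.rpow_le_rpow (Real.sinh_nonneg_iff.2 hs'.1)
              (Real.sinh_le_sinh.2 hs'.2) (by linarith))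
        simpa using this
      have hc : 0 < Real.cosh y / Real.sinh y := div_pos (Real.cosh_pos y) hs
      calc G y * (Real.cosh y / Real.sinh y) ≤ (y * S y) * (Real.cosh y / Real.sinh y) := by
            exact mul_le_mul_of_nonneg_right hGle hc.le
        _ = y * Real.sinh y ^ (n - 2) * Real.cosh y := by
            rw [hSdef]
            rw [show n - 2 = (n - 1) - 1 by ring, Real.rpow_sub_one hs.ne']
            field_simp
  have hcoth : ContinuousOn (fun x => G x * (Real.cosh x / Real.sinh x)) (Icc 0 R) := by
    intro x hx
    rcases eq_or_lt_of_le hx.1 with h0 | h0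
    · rw [← h0]
      have hval : G 0 * (Real.cosh 0 / Real.sinh 0) = 0 := by simp [hG0]
      rw [ContinuousWithinAt, hval]
      have hupper : Filter.Tendsto (fun y => y * Real.sinh y ^ (n - 2) * Real.cosh y)
          (nhdsWithin 0 (Icc 0 R)) (nhds 0) := by
        have hca : ContinuousAt (fun y : ℝ => y * Real.sinh y ^ (n - 2) * Real.cosh y) 0 := by
          exact (continuousAt_id.mul ((Real.continuousAt_rpow_const _ _
            (Or.inr (by linarith))).comp Real.continuous_sinh.continuousAt)).mul
            Real.continuous_cosh.continuousAt
        have h0v : (0:ℝ) * Real.sinh 0 ^ (n - 2) * Real.cosh 0 = 0 := by simp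
        have ht := hca.tendsto.mono_left (nhdsWithin_le_nhds (s := Icc 0 R))
        rwa [h0v] at ht
      refine tendsto_of_tendsto_of_tendsto_of_le_of_le' tendsto_const_nhds hupper ?_ ?_
      · filter_upwards [self_mem_nhdsWithin] with y hy
        exact mul_nonneg (hGnonneg y hy.1)
          (div_nonneg (Real.cosh_pos y).le (Real.sinh_nonneg_iff.2 hy.1))
      · filter_upwards [self_mem_nhdsWithin] with y hy
        exact hGbound y hy
    · exact (hGcont.continuousAt.mul (Real.continuous_cosh.continuousAt.div
        Real.continuous_sinh.continuousAt (Real.sinh_pos_iff.2 h0).ne')).continuousWithinAt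
  set L : ℝ → ℝ := fun x => G x * (Real.cosh x / Real.sinh x) - S x / n with hLdef
  have hLcont : ContinuousOn L (Icc 0 R) := hcoth.sub (hScont.continuousOn.div_const n)
  -- numerology of p
  have hp1 : p + 1 = 2 * n / (n - 2) := by rw [hp]; field_simp; ring
  have hq2 : 2 < p + 1 := by rw [hp1, lt_div_iff₀ hn2]; linarith
  have hp1pos : 0 < p + 1 := by linarith
  -- the Pohozaev function
  set Q : ℝ → ℝ := fun x => G x * (u' x * u' x) / 2
      + G x * (lam * (u x * u x) / 2 + |u x| ^ (p + 1) / (p + 1))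
      + (n - 2) / (2 * n) * (S x * (u x * u' x)) with hQdef
  have habscont : Continuous (fun t : ℝ => |t| ^ (p + 1)) :=
    (Real.continuous_rpow_const (by linarith)).comp continuous_abs
  have hQcont : ContinuousOn Q (Icc 0 R) := by
    refine (((hGcont.continuousOn.mul (hu'cont.mul hu'cont)).div_const 2).add
      (hGcont.continuousOn.mul ((((hucont.mul hucont).const_smul lam).div_const 2).add
        ((habscont.comp_continuousOn hucont).div_const (p + 1))))).add
      (continuousOn_const.mul (hScont.continuousOn.mul (hucont.mul hu'cont)))
  -- the combined derivative
  set D : ℝ → ℝ := fun x => lam / n * (u x ^ 2 * S x) - (n - 1) * (u' x ^ 2 * L x) with hDdef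
  have hQderiv : ∀ x ∈ Ioo (0:ℝ) R, HasDerivAt Q (D x) x := by
    intro x hx
    have hx0 : 0 < x := hx.1
    have hmem : x ∈ Icc (0:ℝ) R := ⟨hx0.le, hx.2.le⟩
    have hs : 0 < Real.sinh x := Real.sinh_pos_iff.2 hx0
    have hux := hu x hmem
    have hu'x := hu' x hmem
    have hGx := hG x
    have hSx : HasDerivAt S ((n - 1) * Real.sinh x ^ (n - 1 - 1) * Real.cosh x) x := by
      have h := (Real.hasDerivAt_rpow_const (x := Real.sinh x) (p := n - 1)
        (Or.inl hs.ne')).comp x (Real.hasDerivAt_sinh x)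
      simpa [Function.comp_def] using h
    have habs : HasDerivAt (fun y => |u y| ^ (p + 1))
        ((p + 1) * |u x| ^ (p - 1) * u x * u' x) x := by
      have h := (hasDerivAt_abs_rpow (u x) (p := p + 1) (by linarith)).comp x hux
      have he : p + 1 - 2 = p - 1 := by ring
      simpa [Function.comp_def, he, mul_assoc] using h
    have hQ' : HasDerivAt Q
        ((S x * (u' x * u' x) + G x * (u'' x * u' x + u' x * u'' x)) / 2
          + (S x * (lam * (u x * u x) / 2 + |u x| ^ (p + 1) / (p + 1))
            + G x * (lam * (u' x * u x + u x * u' x) / 2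
              + ((p + 1) * |u x| ^ (p - 1) * u x * u' x) / (p + 1)))
          + (n - 2) / (2 * n) * ((n - 1) * Real.sinh x ^ (n - 1 - 1) * Real.cosh x
              * (u x * u' x) + S x * (u' x * u' x + u x * u'' x))) x := by
      exact (((hGx.mul (hu'x.mul hu'x)).div_const 2).add
        (hGx.mul ((((hux.mul hux).const_mul lam).div_const 2).add
          (habs.div_const (p + 1))))).add
        ((hSx.mul (hux.mul hu'x)).const_mul ((n - 2) / (2 * n)))
    have hode' : u'' x = -(n - 1) * (Real.cosh x / Real.sinh x) * u' x - lam * u x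
        - |u x| ^ (p - 1) * u x := by
      have h := hode x hx
      linarith
    have hw : |u x| ^ (p + 1) = |u x| ^ (p - 1) * (u x * u x) := by
      rcases eq_or_ne (u x) 0 with h | h
      · simp [h, Real.zero_rpow hp1pos.ne']
      · have ha : 0 < |u x| := abs_pos.2 h
        rw [show p + 1 = (p - 1) + 2 by ring, Real.rpow_add ha]
        rw [show ((2:ℝ)) = ((2:ℕ):ℝ) by norm_num, Real.rpow_natCast, sq_abs]
        ring
    have hps : Real.sinh x ^ (n - 1 - 1) = Real.sinh x ^ (n - 1) / Real.sinh x :=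
      Real.rpow_sub_one hs.ne' _
    convert hQ' using 1
    simp only [hDdef, hLdef, hSdef]
    rw [hode', hw, hps, hp1]
    field_simp
    ring
  -- integrability
  have hf1int : IntervalIntegrable (fun x => u x ^ 2 * S x) volume 0 R :=
    ((hucont.pow 2).mul hScont.continuousOn).intervalIntegrable_of_Icc hR.le
  have hf2int : IntervalIntegrable (fun x => u' x ^ 2 * L x) volume 0 R :=
    ((hu'cont.pow 2).mul hLcont).intervalIntegrable_of_Icc hR.le
  have hDint : IntervalIntegrable D volume 0 R := by
    rw [hDdef]
    exact (hf1int.const_mul (lam / n)).sub (hf2int.const_mul (n - 1))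
  have hFTC : ∫ x in (0:ℝ)..R, D x = Q R - Q 0 :=
    intervalIntegral.integral_eq_sub_of_hasDerivAt_of_le hR.le hQcont hQderiv hDint
  have hQ0 : Q 0 = 0 := by
    simp [hQdef, hG0, hSdef, Real.sinh_zero, Real.zero_rpow hn1.ne']
  have hQR : Q R = G R * (u' R * u' R) / 2 := by
    simp [hQdef, huR, Real.zero_rpow hp1pos.ne']
  have hsplit : ∫ x in (0:ℝ)..R, D x
      = lam / n * (∫ x in (0:ℝ)..R, u x ^ 2 * S x)
        - (n - 1) * ∫ x in (0:ℝ)..R, u' x ^ 2 * L x := by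
    rw [hDdef, intervalIntegral.integral_sub (hf1int.const_mul _) (hf2int.const_mul _),
      intervalIntegral.integral_const_mul, intervalIntegral.integral_const_mul]
  -- positivity of the denominator
  have hexists : ∃ y, y ∈ Ioo (0:ℝ) R ∧ u y ≠ 0 := by
    obtain ⟨x₀, hx₀, hx₀ne⟩ := hnontriv
    rcases lt_or_eq_of_le hx₀.1 with h0 | h0
    · rcases lt_or_eq_of_le hx₀.2 with hR' | hR'
      · exact ⟨x₀, ⟨h0, hR'⟩, hx₀ne⟩
      · exact absurd (hR' ▸ huR : u x₀ = 0) hx₀ne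
    · have hc : ContinuousAt u x₀ := (hu x₀ hx₀).continuousAt
      obtain ⟨δ, hδ, hball⟩ := Metric.eventually_nhds_iff.1 (hc.eventually_ne hx₀ne)
      refine ⟨min (δ / 2) (R / 2), ⟨by positivity, ?_⟩, ?_⟩
      · exact lt_of_le_of_lt (min_le_right _ _) (by linarith)
      · apply hball
        rw [Real.dist_eq, ← h0, sub_zero, abs_of_pos (by positivity)]
        exact lt_of_le_of_lt (min_le_left _ _) (by linarith)
  obtain ⟨y, hy, hyne⟩ := hexists
  have hcy : ContinuousAt u y := (hu y ⟨hy.1.le, hy.2.le⟩).continuousAt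
  obtain ⟨δ, hδ, hball⟩ := Metric.eventually_nhds_iff.1 (hcy.eventually_ne hyne)
  set a := max (y - δ / 2) (y / 2) with hadef
  set b := min (y + δ / 2) ((y + R) / 2) with hbdef
  have hya : a < y := max_lt (by linarith) (by linarith [hy.1])
  have hyb : y < b := lt_min (by linarith) (by linarith [hy.2])
  have ha0 : 0 < a := lt_of_lt_of_le (by linarith [hy.1] : (0:ℝ) < y / 2) (le_max_right _ _)
  have hbR : b < R := lt_of_le_of_lt (min_le_right _ _) (by linarith [hy.2])
  have hab : a < b := hya.trans hyb
  have haR : a ≤ R := (hab.trans hbR).le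
  have hb0 : 0 ≤ b := (ha0.trans hab).le
  have hmemIcc : ∀ c : ℝ, 0 ≤ c → c ≤ R → c ∈ uIcc (0:ℝ) R := by
    intro c h1 h2
    rw [uIcc_of_le hR.le]; exact ⟨h1, h2⟩
  have int0a : IntervalIntegrable (fun x => u x ^ 2 * S x) volume 0 a :=
    hf1int.mono_set (uIcc_subset_uIcc (hmemIcc 0 le_rfl hR.le) (hmemIcc a ha0.le haR))
  have intab : IntervalIntegrable (fun x => u x ^ 2 * S x) volume a b :=
    hf1int.mono_set (uIcc_subset_uIcc (hmemIcc a ha0.le haR) (hmemIcc b hb0 hbR.le))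
  have intbR : IntervalIntegrable (fun x => u x ^ 2 * S x) volume b R :=
    hf1int.mono_set (uIcc_subset_uIcc (hmemIcc b hb0 hbR.le) (hmemIcc R hR.le le_rfl))
  have int0b : IntervalIntegrable (fun x => u x ^ 2 * S x) volume 0 b :=
    hf1int.mono_set (uIcc_subset_uIcc (hmemIcc 0 le_rfl hR.le) (hmemIcc b hb0 hbR.le))
  have hmid : ∀ x ∈ Ioo a b, 0 < u x ^ 2 * S x := by
    intro x hx
    have h1 : y - δ / 2 ≤ a := le_max_left _ _
    have h2 : b ≤ y + δ / 2 := min_le_left _ _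
    have hxy : dist x y < δ := by
      rw [Real.dist_eq, abs_lt]
      constructor
      · linarith [hx.1]
      · linarith [hx.2]
    have hne : u x ≠ 0 := hball hxy
    exact mul_pos (pow_two_pos_of_ne_zero hne) (hSpos x (ha0.trans hx.1))
  have e1 : (∫ x in (0:ℝ)..a, u x ^ 2 * S x) + (∫ x in a..b, u x ^ 2 * S x)
      = ∫ x in (0:ℝ)..b, u x ^ 2 * S x :=
    intervalIntegral.integral_add_adjacent_intervals int0a intab
  have e2 : (∫ x in (0:ℝ)..b, u x ^ 2 * S x) + (∫ x in b..R, u x ^ 2 * S x)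
      = ∫ x in (0:ℝ)..R, u x ^ 2 * S x :=
    intervalIntegral.integral_add_adjacent_intervals int0b intbR
  have hpos1 : 0 ≤ ∫ x in (0:ℝ)..a, u x ^ 2 * S x :=
    intervalIntegral.integral_nonneg ha0.le
      (fun x hx => mul_nonneg (sq_nonneg _) (hSnonneg x hx.1))
  have hpos2 : 0 < ∫ x in a..b, u x ^ 2 * S x :=
    intervalIntegral.intervalIntegral_pos_of_pos_on intab hmid hab
  have hpos3 : 0 ≤ ∫ x in b..R, u x ^ 2 * S x :=
    intervalIntegral.integral_nonneg hbR.le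
      (fun x hx => mul_nonneg (sq_nonneg _) (hSnonneg x (hb0.trans hx.1)))
  have hI1pos : 0 < ∫ x in (0:ℝ)..R, u x ^ 2 * S x := by
    rw [← e2, ← e1]; linarith
  -- conclusion
  have hQRnn : 0 ≤ Q R := by
    rw [hQR]
    have := hGnonneg R hR.le
    have := mul_self_nonneg (u' R)
    positivity
  have hkey : lam / n * (∫ x in (0:ℝ)..R, u x ^ 2 * S x)
      - (n - 1) * (∫ x in (0:ℝ)..R, u' x ^ 2 * L x) = Q R := by
    rw [← hsplit, hFTC, hQ0, sub_zero]
  have hL2 : ∀ x : ℝ, G x * (Real.cosh x / Real.sinh x) - S x / n = L x := fun _ => rfl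
  rw [ge_iff_le, div_le_iff₀ hI1pos]
  have hexp : n * (lam / n * (∫ x in (0:ℝ)..R, u x ^ 2 * S x)
      - (n - 1) * (∫ x in (0:ℝ)..R, u' x ^ 2 * L x))
      = lam * (∫ x in (0:ℝ)..R, u x ^ 2 * S x)
        - n * (n - 1) * (∫ x in (0:ℝ)..R, u' x ^ 2 * L x) := by
    field_simp
  have hfin : n * (lam / n * (∫ x in (0:ℝ)..R, u x ^ 2 * S x)
      - (n - 1) * (∫ x in (0:ℝ)..R, u' x ^ 2 * L x)) = n * Q R := by rw [hkey]
  rw [hexp] at hfin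
  nlinarith [mul_nonneg hn0.le hQRnn]
end
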